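/- Let k be a positive integer and set C(k) = N₄(k) − 192·L₁,₁,₂(k) − 192·L₃(k) − 48·L₂(k) − 96·L₁,₂(k) − 64·L₁,₃(k) − 96·L₂(k/2), where L₂(k/2) is interpreted as 0 when k is odd. If k = m² for some odd positive integer m, then 384·L₄(k) = C(k) − 8; if k = 2m² or k = 4m² for some positive integer m, then 384·L₄(k) = C(k) − 24; if k = 3m² for some positive integer m, then 384·L₄(k) = C(k) − 32. -/

import Mathlib

open Finset
open Finset

noncomputable def mkperm (u₁ u₂ i j : Fin 4) : Equiv.Perm (Fin 4) :=
  (Equiv.swap u₁ i * Equiv.swap u₂ ((Equiv.swap u₁ i) j))⁻¹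

lemma mkperm_i (u₁ u₂ i j : Fin 4) (h12 : u₁ ≠ u₂) (hij : i ≠ j) :
    mkperm u₁ u₂ i j i = u₁ := by
  have key : (Equiv.swap u₁ i * Equiv.swap u₂ ((Equiv.swap u₁ i) j)) u₁ = i := by
    have h1 : Equiv.swap u₂ ((Equiv.swap u₁ i) j) u₁ = u₁ := by
      apply Equiv.swap_apply_of_ne_of_ne h12
      intro hcon
      have : (Equiv.swap u₁ i) j = (Equiv.swap u₁ i) i := by
        rw [Equiv.swap_apply_right, ← hcon]
      exact hij (Equiv.injective _ this).symm
    simp [Equiv.Perm.mul_apply, h1]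
  show (Equiv.swap u₁ i * Equiv.swap u₂ ((Equiv.swap u₁ i) j))⁻¹ i = u₁
  rw [Equiv.Perm.inv_def, Equiv.symm_apply_eq]
  exact key.symm

lemma mkperm_j (u₁ u₂ i j : Fin 4) :
    mkperm u₁ u₂ i j j = u₂ := by
  have key : (Equiv.swap u₁ i * Equiv.swap u₂ ((Equiv.swap u₁ i) j)) u₂ = j := by
    simp [Equiv.Perm.mul_apply]
  show (Equiv.swap u₁ i * Equiv.swap u₂ ((Equiv.swap u₁ i) j))⁻¹ j = u₂
  rw [Equiv.Perm.inv_def, Equiv.symm_apply_eq]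
  exact key.symm

lemma ncard_range_perm_inj (h : Fin 4 → ℕ) (hinj : Function.Injective h) :
    (Set.range fun σ : Equiv.Perm (Fin 4) => h ∘ σ).ncard = 24 := by
  have hrinj : Function.Injective (fun σ : Equiv.Perm (Fin 4) => h ∘ σ) :=
    fun σ τ hst => Equiv.ext fun t => hinj (congrFun hst t)
  rw [← Set.image_univ, Set.ncard_image_of_injective _ hrinj, Set.ncard_univ,
    Nat.card_eq_fintype_card]
  simp [Fintype.card_perm]; rfl

lemma ncard_range_perm_pair (h : Fin 4 → ℕ) (a c d : ℕ) (u₁ u₂ : Fin 4)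
    (hu : u₁ ≠ u₂) (hc : h u₁ = c) (hd : h u₂ = d)
    (ha : ∀ t, t ≠ u₁ → t ≠ u₂ → h t = a)
    (hac : a ≠ c) (had : a ≠ d) (hcd : c ≠ d) :
    (Set.range fun σ : Equiv.Perm (Fin 4) => h ∘ σ).ncard = 12 := by
  classical
  set φ : Fin 4 × Fin 4 → (Fin 4 → ℕ) :=
    fun p t => if t = p.1 then c else if t = p.2 then d else a with hφ
  have key : (Set.range fun σ : Equiv.Perm (Fin 4) => h ∘ σ)
      = φ '' {p | p.1 ≠ p.2} := by
    ext g
    constructor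
    · rintro ⟨σ, rfl⟩
      refine ⟨(σ⁻¹ u₁, σ⁻¹ u₂), by simpa using hu, ?_⟩
      funext t
      show (if t = σ⁻¹ u₁ then c else if t = σ⁻¹ u₂ then d else a) = h (σ t)
      by_cases h1 : t = σ⁻¹ u₁
      · subst h1; simp [hc]
      · by_cases h2 : t = σ⁻¹ u₂
        · subst h2; simp [h1, hd, hu.symm]
        · rw [if_neg h1, if_neg h2, ha (σ t) ?_ ?_]
          · intro hcon; exact h1 (by simp [← hcon])
          · intro hcon; exact h2 (by simp [← hcon])
    · rintro ⟨⟨i, j⟩, hij, rfl⟩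
      simp only [Set.mem_setOf_eq] at hij
      refine ⟨mkperm u₁ u₂ i j, ?_⟩
      funext t
      show h (mkperm u₁ u₂ i j t) = if t = i then c else if t = j then d else a
      by_cases h1 : t = i
      · subst h1; simp [mkperm_i _ _ _ _ hu hij, hc]
      · by_cases h2 : t = j
        · subst h2; simp [h1, mkperm_j, hd]
        · rw [if_neg h1, if_neg h2]
          apply ha
          · intro hcon
            exact h1 (Equiv.injective _ (by rw [hcon, mkperm_i _ _ _ _ hu hij]))
          · intro hcon
            exact h2 (Equiv.injective _ (by rw [hcon, mkperm_j]))
  rw [key, Set.ncard_image_of_injOn ?_]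
  · rw [Set.ncard_eq_toFinset_card']; decide
  · rintro ⟨i, j⟩ hij ⟨i', j'⟩ hij' hee
    simp only [Set.mem_setOf_eq] at hij hij'
    have e1 := congrFun hee i
    have e2 := congrFun hee j
    simp only [hφ, eq_self_iff_true, if_true, if_neg (Ne.symm hij)] at e1 e2
    have hi : i = i' := by
      by_cases q1 : i = i'
      · exact q1
      · rw [if_neg q1] at e1
        by_cases q2 : i = j'
        · rw [if_pos q2] at e1; exact absurd e1 hcd
        · rw [if_neg q2] at e1; exact absurd e1.symm hac
    have hj : j = j' := by
      by_cases q1 : j = i'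
      · rw [if_pos q1] at e2; exact absurd e2.symm hcd
      · rw [if_neg q1] at e2
        by_cases q2 : j = j'
        · exact q2
        · rw [if_neg q2] at e2; exact absurd e2.symm had
    simp [hi, hj]

lemma ncard_range_perm_twopairs (h : Fin 4 → ℕ) (a c : ℕ) (u₁ u₂ : Fin 4)
    (hu : u₁ ≠ u₂) (hc1 : h u₁ = c) (hc2 : h u₂ = c)
    (ha : ∀ t, t ≠ u₁ → t ≠ u₂ → h t = a) (hac : a ≠ c) :
    (Set.range fun σ : Equiv.Perm (Fin 4) => h ∘ σ).ncard = 6 := by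
  classical
  set φ : Fin 4 × Fin 4 → (Fin 4 → ℕ) :=
    fun p t => if t = p.1 ∨ t = p.2 then c else a with hφ
  have hval : ∀ (σ : Equiv.Perm (Fin 4)) (i j : Fin 4), σ i = u₁ → σ j = u₂ →
      h ∘ σ = φ (i, j) := by
    intro σ i j hi hj
    funext t
    show h (σ t) = if t = i ∨ t = j then c else a
    by_cases h1 : t = i
    · subst h1; simp [hi, hc1]
    · by_cases h2 : t = j
      · subst h2; simp [hj, hc2]
      · rw [if_neg (by tauto)]
        apply ha
        · intro hcon; exact h1 (Equiv.injective σ (by rw [hcon, hi]))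
        · intro hcon; exact h2 (Equiv.injective σ (by rw [hcon, hj]))
  have key : (Set.range fun σ : Equiv.Perm (Fin 4) => h ∘ σ)
      = φ '' {p | p.1 < p.2} := by
    ext g
    constructor
    · rintro ⟨σ, rfl⟩
      rcases lt_or_gt_of_ne (show σ⁻¹ u₁ ≠ σ⁻¹ u₂ by simpa using hu) with hlt | hlt
      · exact ⟨(σ⁻¹ u₁, σ⁻¹ u₂), hlt, (hval σ _ _ (by simp) (by simp)).symm⟩
      · refine ⟨(σ⁻¹ u₂, σ⁻¹ u₁), hlt, ?_⟩
        show φ _ = h ∘ ⇑σ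
        rw [hval σ (σ⁻¹ u₁) (σ⁻¹ u₂) (by simp) (by simp)]
        funext t
        simp only [hφ]
        exact if_congr or_comm rfl rfl
    · rintro ⟨⟨i, j⟩, hij, rfl⟩
      simp only [Set.mem_setOf_eq] at hij
      exact ⟨mkperm u₁ u₂ i j, hval _ _ _ (mkperm_i _ _ _ _ hu hij.ne) (mkperm_j _ _ _ _)⟩
  rw [key, Set.ncard_image_of_injOn ?_]
  · rw [Set.ncard_eq_toFinset_card']; decide
  · rintro ⟨i, j⟩ hij ⟨i', j'⟩ hij' hee
    simp only [Set.mem_setOf_eq] at hij hij'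
    have key2 : ∀ t : Fin 4, (t = i ∨ t = j) ↔ (t = i' ∨ t = j') := by
      intro t
      have := congrFun hee t
      simp only [hφ] at this
      by_cases q1 : t = i ∨ t = j <;> by_cases q2 : t = i' ∨ t = j'
      · tauto
      · rw [if_pos q1, if_neg q2] at this; exact absurd this.symm hac
      · rw [if_neg q1, if_pos q2] at this; exact absurd this hac
      · tauto
    have k1 := (key2 i).mp (Or.inl rfl)
    have k2 := (key2 j).mp (Or.inr rfl)
    have k3 := (key2 i').mpr (Or.inl rfl)
    have k4 := (key2 j').mpr (Or.inr rfl)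
    simp only [Fin.ext_iff] at k1 k2 k3 k4 ⊢
    have h1 : i.val < j.val := hij
    have h2 : i'.val < j'.val := hij'
    simp only [Prod.ext_iff, Fin.ext_iff]
    omega

lemma ncard_range_perm_triple (h : Fin 4 → ℕ) (a d : ℕ) (u : Fin 4)
    (hd : h u = d) (ha : ∀ t, t ≠ u → h t = a) (had : a ≠ d) :
    (Set.range fun σ : Equiv.Perm (Fin 4) => h ∘ σ).ncard = 4 := by
  classical
  set φ : Fin 4 → (Fin 4 → ℕ) := fun i t => if t = i then d else a with hφ
  have key : (Set.range fun σ : Equiv.Perm (Fin 4) => h ∘ σ) = φ '' Set.univ := by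
    ext g
    constructor
    · rintro ⟨σ, rfl⟩
      refine ⟨σ⁻¹ u, trivial, ?_⟩
      funext t
      show (if t = σ⁻¹ u then d else a) = h (σ t)
      by_cases h1 : t = σ⁻¹ u
      · subst h1; simp [hd]
      · rw [if_neg h1, ha (σ t) fun hcon => h1 (by simp [← hcon])]
    · rintro ⟨i, -, rfl⟩
      refine ⟨Equiv.swap u i, ?_⟩
      funext t
      show h (Equiv.swap u i t) = if t = i then d else a
      by_cases h1 : t = i
      · subst h1; simp [hd]
      · rw [if_neg h1]
        apply ha
        intro hcon
        exact h1 (Equiv.injective _ (by rw [hcon, Equiv.swap_apply_right]))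
  rw [key, Set.ncard_image_of_injOn ?_]
  · simp [Set.ncard_univ]
  · intro i _ i' _ hee
    have := congrFun hee i
    simp only [hφ, if_pos rfl] at this
    by_cases q : i = i'
    · exact q
    · rw [if_neg q] at this; exact absurd this.symm had

lemma ncard_range_perm_const (h : Fin 4 → ℕ) (a : ℕ) (ha : ∀ t, h t = a) :
    (Set.range fun σ : Equiv.Perm (Fin 4) => h ∘ σ).ncard = 1 := by
  have key : (Set.range fun σ : Equiv.Perm (Fin 4) => h ∘ σ) = {h} := by
    ext g
    constructor
    · rintro ⟨σ, rfl⟩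
      funext t
      show h (σ t) = h t
      rw [ha, ha]
    · rintro rfl
      exact ⟨1, by funext t; rfl⟩
  rw [key, Set.ncard_singleton]
open Finset

noncomputable def N4 (k : ℕ) : ℕ := {q : ℤ × ℤ × ℤ × ℤ | q.1 ^ 2 + q.2.1 ^ 2 + q.2.2.1 ^ 2 + q.2.2.2 ^ 2 = (k : ℤ)}.ncard

def Wt (g : Fin 4 → ℕ) : ℕ := ∏ i, if g i = 0 then 1 else 2

noncomputable def AZ (k : ℕ) : Finset (Fin 4 → ℤ) :=
  (Fintype.piFinset fun _ => Finset.Icc (-(k:ℤ)) (k:ℤ)).filter fun f => ∑ i, f i ^ 2 = (k:ℤ)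

def AN (k : ℕ) : Finset (Fin 4 → ℕ) :=
  (Fintype.piFinset fun _ => Finset.range (k+1)).filter fun g => ∑ i, g i ^ 2 = k

def SN (k : ℕ) : Finset (Fin 4 → ℕ) :=
  (AN k).filter fun h => h 0 ≤ h 1 ∧ h 1 ≤ h 2 ∧ h 2 ≤ h 3

def cl (h : Fin 4 → ℕ) : Bool × Bool × Bool × Bool :=
  (h 0 == 0, h 0 == h 1, h 1 == h 2, h 2 == h 3)

lemma int_in_Icc {k : ℕ} {x : ℤ} (h : x ^ 2 ≤ (k:ℤ)) : x ∈ Finset.Icc (-(k:ℤ)) (k:ℤ) := by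
  have h1 : ((x.natAbs : ℤ)) ^ 2 = x ^ 2 := Int.natAbs_sq x
  have h2 : x.natAbs ≤ x.natAbs ^ 2 := Nat.le_self_pow two_ne_zero _
  have h4 : ((x.natAbs : ℤ)) ≤ ((x.natAbs : ℤ)) ^ 2 := by exact_mod_cast h2
  have h5 : (x.natAbs : ℤ) ≤ (k : ℤ) := by linarith
  rw [Finset.mem_Icc]
  omega

lemma chain_mono (h : Fin 4 → ℕ) (h01 : h 0 ≤ h 1) (h12 : h 1 ≤ h 2) (h23 : h 2 ≤ h 3) :
    Monotone h := by
  intro a b hab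
  have hv : a.val ≤ b.val := hab
  fin_cases a <;> fin_cases b <;> simp_all <;> omega

lemma N4_eq (k : ℕ) : N4 k = (AZ k).card := by
  classical
  have hinj : Function.Injective (fun f : Fin 4 → ℤ => (f 0, f 1, f 2, f 3)) := by
    intro f g hfg
    simp only [Prod.mk.injEq] at hfg
    funext t; fin_cases t <;> tauto
  have hset : {q : ℤ × ℤ × ℤ × ℤ | q.1 ^ 2 + q.2.1 ^ 2 + q.2.2.1 ^ 2 + q.2.2.2 ^ 2 = (k : ℤ)}
      = (fun f : Fin 4 → ℤ => (f 0, f 1, f 2, f 3)) '' ↑(AZ k) := by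
    ext ⟨x, y, z, v⟩
    simp only [Set.mem_setOf_eq, Set.mem_image, Finset.mem_coe]
    constructor
    · intro hsum
      refine ⟨fun t => if t = 0 then x else if t = 1 then y else if t = 2 then z else v, ?_, rfl⟩
      simp only [AZ, Finset.mem_filter, Fintype.mem_piFinset]
      constructor
      · intro a
        have hx : x ∈ Finset.Icc (-(k:ℤ)) (k:ℤ) := int_in_Icc (by nlinarith [sq_nonneg y, sq_nonneg z, sq_nonneg v])
        have hy : y ∈ Finset.Icc (-(k:ℤ)) (k:ℤ) := int_in_Icc (by nlinarith [sq_nonneg x, sq_nonneg z, sq_nonneg v])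
        have hz : z ∈ Finset.Icc (-(k:ℤ)) (k:ℤ) := int_in_Icc (by nlinarith [sq_nonneg y, sq_nonneg x, sq_nonneg v])
        have hv : v ∈ Finset.Icc (-(k:ℤ)) (k:ℤ) := int_in_Icc (by nlinarith [sq_nonneg y, sq_nonneg z, sq_nonneg x])
        fin_cases a
        · simpa using hx
        · simpa using hy
        · simpa using hz
        · simpa using hv
      · rw [Fin.sum_univ_four]; simpa using hsum
    · rintro ⟨f, hf, heq⟩
      simp only [Prod.mk.injEq] at heq
      obtain ⟨rfl, rfl, rfl, rfl⟩ := heq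
      simp only [AZ, Finset.mem_filter, Fin.sum_univ_four] at hf
      exact hf.2
  rw [N4, hset, Set.ncard_image_of_injective _ hinj, Set.ncard_coe_finset]

lemma AZ_card (k : ℕ) : (AZ k).card = ∑ g ∈ AN k, Wt g := by
  classical
  rw [Finset.card_eq_sum_card_fiberwise (f := fun f i => (f i).natAbs) (t := AN k) ?maps]
  case maps =>
    intro f hf
    simp only [AZ, Finset.mem_coe, Finset.mem_filter, Fintype.mem_piFinset, Finset.mem_Icc] at hf
    simp only [AN, Finset.mem_coe, Finset.mem_filter, Fintype.mem_piFinset, Finset.mem_range]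
    constructor
    · intro a
      have := hf.1 a
      omega
    · have : ((∑ i, (f i).natAbs ^ 2 : ℕ) : ℤ) = ∑ i, f i ^ 2 := by
        rw [Nat.cast_sum]
        exact Finset.sum_congr rfl fun i _ => by rw [Nat.cast_pow, Int.natAbs_sq]
      have h2 := hf.2
      omega
  · apply Finset.sum_congr rfl
    intro g hg
    simp only [AN, Finset.mem_filter, Fintype.mem_piFinset, Finset.mem_range] at hg
    have hfib : (AZ k).filter (fun f => (fun i => (f i).natAbs) = g)
        = Fintype.piFinset (fun i => if g i = 0 then ({0} : Finset ℤ) else {-(g i : ℤ), (g i : ℤ)}) := by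
      ext f
      simp only [AZ, Finset.mem_filter, Fintype.mem_piFinset, Finset.mem_Icc, funext_iff]
      constructor
      · rintro ⟨⟨hbd, hsum⟩, habs⟩
        intro a
        by_cases hz : g a = 0
        · rw [if_pos hz]
          have := habs a
          simp only [Finset.mem_singleton]
          omega
        · rw [if_neg hz]
          simp only [Finset.mem_insert, Finset.mem_singleton]
          have := habs a
          omega
      · intro hmem
        have habs : ∀ a, (f a).natAbs = g a := by
          intro a
          have := hmem a
          by_cases hz : g a = 0
          · rw [if_pos hz] at this
            simp only [Finset.mem_singleton] at this
            omega
          · rw [if_neg hz] at this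
            simp only [Finset.mem_insert, Finset.mem_singleton] at this
            omega
        refine ⟨⟨?_, ?_⟩, habs⟩
        · intro a
          have h1 := habs a
          have h2 := hg.1 a
          omega
        · have : ∀ a, f a ^ 2 = ((g a : ℤ)) ^ 2 := by
            intro a
            rw [← habs a, Int.natAbs_sq]
          rw [Finset.sum_congr rfl fun a _ => this a]
          rw [show (∑ a : Fin 4, ((g a : ℤ)) ^ 2) = ((∑ a : Fin 4, g a ^ 2 : ℕ) : ℤ) by push_cast; rfl, hg.2]
    rw [hfib, Fintype.card_piFinset]
    unfold Wt
    apply Finset.prod_congr rfl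
    intro a _
    by_cases hz : g a = 0
    · simp [hz]
    · simp only [if_neg hz]
      rw [Finset.card_insert_of_notMem (by simp; omega), Finset.card_singleton]

lemma Wt_comp (g : Fin 4 → ℕ) (σ : Equiv.Perm (Fin 4)) : Wt (g ∘ σ) = Wt g :=
  Equiv.prod_comp σ (fun i => if g i = 0 then 1 else 2)

lemma mem_AN_comp {k : ℕ} {h : Fin 4 → ℕ} (hh : h ∈ AN k) (σ : Equiv.Perm (Fin 4)) :
    h ∘ σ ∈ AN k := by
  simp only [AN, Finset.mem_filter, Fintype.mem_piFinset, Finset.mem_range] at hh ⊢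
  exact ⟨fun a => hh.1 (σ a), by rw [← hh.2]; exact Equiv.sum_comp σ (fun i => h i ^ 2)⟩

lemma fiber_eq {k : ℕ} {h : Fin 4 → ℕ} (hh : h ∈ SN k) :
    ((AN k).filter fun g => g ∘ Tuple.sort g = h : Finset (Fin 4 → ℕ))
      = (Set.range fun σ : Equiv.Perm (Fin 4) => h ∘ σ).toFinset := by
  classical
  simp only [SN, Finset.mem_filter] at hh
  have hmono : Monotone h := chain_mono h hh.2.1 hh.2.2.1 hh.2.2.2
  ext g
  simp only [Finset.mem_filter, Set.mem_toFinset, Set.mem_range]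
  constructor
  · rintro ⟨hgAN, hgs⟩
    exact ⟨(Tuple.sort g)⁻¹, by rw [← hgs]; funext t; simp⟩
  · rintro ⟨σ, rfl⟩
    refine ⟨mem_AN_comp hh.1 σ, ?_⟩
    rw [Tuple.comp_perm_comp_sort_eq_comp_sort, Tuple.sort_eq_refl_iff_monotone.mpr hmono]
    rfl

lemma sum_W (k : ℕ) : ∑ g ∈ AN k, Wt g
    = ∑ h ∈ SN k, (Set.range fun σ : Equiv.Perm (Fin 4) => h ∘ σ).ncard * Wt h := by
  classical
  rw [← Finset.sum_fiberwise_of_maps_to (g := fun g => g ∘ Tuple.sort g) (t := SN k) ?maps Wt]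
  case maps =>
    intro g hg
    simp only [SN, Finset.mem_filter]
    have hmono := Tuple.monotone_sort g
    refine ⟨mem_AN_comp hg (Tuple.sort g), hmono (by decide), hmono (by decide), hmono (by decide)⟩
  apply Finset.sum_congr rfl
  intro h hh
  have hW : ∀ g ∈ (AN k).filter fun g => g ∘ Tuple.sort g = h, Wt g = Wt h := by
    intro g hg
    simp only [Finset.mem_filter] at hg
    rw [← hg.2, Wt_comp]
  rw [Finset.sum_congr rfl hW, Finset.sum_const, smul_eq_mul, fiber_eq hh,
    Set.ncard_eq_toFinset_card']
open Finset

noncomputable def L4 (k : ℕ) : ℕ := {q : ℕ × ℕ × ℕ × ℕ | 0 < q.1 ∧ q.1 < q.2.1 ∧ q.2.1 < q.2.2.1 ∧ q.2.2.1 < q.2.2.2 ∧ q.1 ^ 2 + q.2.1 ^ 2 + q.2.2.1 ^ 2 + q.2.2.2 ^ 2 = k}.ncard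

noncomputable def L112 (k : ℕ) : ℕ := {t : ℕ × ℕ × ℕ | 0 < t.1 ∧ 0 < t.2.2 ∧ t.1 < t.2.1 ∧ t.1 ≠ t.2.2 ∧ t.2.1 ≠ t.2.2 ∧ t.1 ^ 2 + t.2.1 ^ 2 + 2 * t.2.2 ^ 2 = k}.ncard

noncomputable def L3 (k : ℕ) : ℕ := {t : ℕ × ℕ × ℕ | 0 < t.1 ∧ t.1 < t.2.1 ∧ t.2.1 < t.2.2 ∧ t.1 ^ 2 + t.2.1 ^ 2 + t.2.2 ^ 2 = k}.ncard

noncomputable def L2 (k : ℕ) : ℕ := {p : ℕ × ℕ | 0 < p.1 ∧ p.1 < p.2 ∧ p.1 ^ 2 + p.2 ^ 2 = k}.ncard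

noncomputable def L12 (k : ℕ) : ℕ := {p : ℕ × ℕ | 0 < p.1 ∧ 0 < p.2 ∧ p.1 ≠ p.2 ∧ p.1 ^ 2 + 2 * p.2 ^ 2 = k}.ncard

noncomputable def L13 (k : ℕ) : ℕ := {p : ℕ × ℕ | 0 < p.1 ∧ 0 < p.2 ∧ p.1 ≠ p.2 ∧ p.1 ^ 2 + 3 * p.2 ^ 2 = k}.ncard

noncomputable def L2half (k : ℕ) : ℕ := if k % 2 = 0 then L2 (k / 2) else 0

-- Finset versions
def L4F (k : ℕ) : Finset (ℕ × ℕ × ℕ × ℕ) :=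
  ((Finset.range (k+1)) ×ˢ (Finset.range (k+1)) ×ˢ (Finset.range (k+1)) ×ˢ (Finset.range (k+1))).filter
    fun q => 0 < q.1 ∧ q.1 < q.2.1 ∧ q.2.1 < q.2.2.1 ∧ q.2.2.1 < q.2.2.2 ∧ q.1 ^ 2 + q.2.1 ^ 2 + q.2.2.1 ^ 2 + q.2.2.2 ^ 2 = k

def L112F (k : ℕ) : Finset (ℕ × ℕ × ℕ) :=
  ((Finset.range (k+1)) ×ˢ (Finset.range (k+1)) ×ˢ (Finset.range (k+1))).filter
    fun t => 0 < t.1 ∧ 0 < t.2.2 ∧ t.1 < t.2.1 ∧ t.1 ≠ t.2.2 ∧ t.2.1 ≠ t.2.2 ∧ t.1 ^ 2 + t.2.1 ^ 2 + 2 * t.2.2 ^ 2 = k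

def L3F (k : ℕ) : Finset (ℕ × ℕ × ℕ) :=
  ((Finset.range (k+1)) ×ˢ (Finset.range (k+1)) ×ˢ (Finset.range (k+1))).filter
    fun t => 0 < t.1 ∧ t.1 < t.2.1 ∧ t.2.1 < t.2.2 ∧ t.1 ^ 2 + t.2.1 ^ 2 + t.2.2 ^ 2 = k

def L2F (k : ℕ) : Finset (ℕ × ℕ) :=
  ((Finset.range (k+1)) ×ˢ (Finset.range (k+1))).filter
    fun p => 0 < p.1 ∧ p.1 < p.2 ∧ p.1 ^ 2 + p.2 ^ 2 = k

def L12F (k : ℕ) : Finset (ℕ × ℕ) :=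
  ((Finset.range (k+1)) ×ˢ (Finset.range (k+1))).filter
    fun p => 0 < p.1 ∧ 0 < p.2 ∧ p.1 ≠ p.2 ∧ p.1 ^ 2 + 2 * p.2 ^ 2 = k

def L13F (k : ℕ) : Finset (ℕ × ℕ) :=
  ((Finset.range (k+1)) ×ˢ (Finset.range (k+1))).filter
    fun p => 0 < p.1 ∧ 0 < p.2 ∧ p.1 ≠ p.2 ∧ p.1 ^ 2 + 3 * p.2 ^ 2 = k

def SQF (r k : ℕ) : Finset ℕ := (Finset.range (k+1)).filter fun d => 0 < d ∧ r * d ^ 2 = k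

-- pieces
def L112Fa (k : ℕ) : Finset (ℕ × ℕ × ℕ) := (L112F k).filter fun t => t.2.2 < t.1
def L112Fbc (k : ℕ) : Finset (ℕ × ℕ × ℕ) := (L112F k).filter fun t => ¬ t.2.2 < t.1
def L112Fb (k : ℕ) : Finset (ℕ × ℕ × ℕ) := (L112Fbc k).filter fun t => t.2.2 < t.2.1
def L112Fc (k : ℕ) : Finset (ℕ × ℕ × ℕ) := (L112Fbc k).filter fun t => ¬ t.2.2 < t.2.1
def L12Fa (k : ℕ) : Finset (ℕ × ℕ) := (L12F k).filter fun p => p.1 < p.2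
def L12Fb (k : ℕ) : Finset (ℕ × ℕ) := (L12F k).filter fun p => ¬ p.1 < p.2
def L13Fa (k : ℕ) : Finset (ℕ × ℕ) := (L13F k).filter fun p => p.1 < p.2
def L13Fb (k : ℕ) : Finset (ℕ × ℕ) := (L13F k).filter fun p => ¬ p.1 < p.2

lemma L112_split (k : ℕ) : (L112F k).card = (L112Fa k).card + (L112Fb k).card + (L112Fc k).card := by
  have h1 := Finset.card_filter_add_card_filter_not (s := L112F k) (p := fun t => t.2.2 < t.1)
  have h2 := Finset.card_filter_add_card_filter_not (s := L112Fbc k) (p := fun t => t.2.2 < t.2.1)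
  unfold L112Fa L112Fb L112Fc L112Fbc at *
  omega

lemma L12_split (k : ℕ) : (L12F k).card = (L12Fa k).card + (L12Fb k).card := by
  have h1 := Finset.card_filter_add_card_filter_not (s := L12F k) (p := fun p => p.1 < p.2)
  unfold L12Fa L12Fb at *
  omega

lemma L13_split (k : ℕ) : (L13F k).card = (L13Fa k).card + (L13Fb k).card := by
  have h1 := Finset.card_filter_add_card_filter_not (s := L13F k) (p := fun p => p.1 < p.2)
  unfold L13Fa L13Fb at *
  omega

lemma L4_card (k : ℕ) : L4 k = (L4F k).card := by
  rw [L4, ← Set.ncard_coe_finset]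
  congr 1
  ext ⟨x, y, z, v⟩
  simp only [Set.mem_setOf_eq, L4F, Finset.coe_filter, Finset.mem_product, Finset.mem_range]
  constructor
  · rintro ⟨h1, h2, h3, h4, h5⟩
    have bx := Nat.le_self_pow two_ne_zero x
    have by' := Nat.le_self_pow two_ne_zero y
    have bz := Nat.le_self_pow two_ne_zero z
    have bv := Nat.le_self_pow two_ne_zero v
    refine ⟨⟨?_, ?_, ?_, ?_⟩, h1, h2, h3, h4, h5⟩ <;> simp only [Nat.lt_add_one_iff] <;> linarith
  · tauto

lemma L112_card (k : ℕ) : L112 k = (L112F k).card := by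
  rw [L112, ← Set.ncard_coe_finset]
  congr 1
  ext ⟨x, y, z⟩
  simp only [Set.mem_setOf_eq, L112F, Finset.coe_filter, Finset.mem_product, Finset.mem_range]
  constructor
  · rintro ⟨h1, h2, h3, h4, h5, h6⟩
    have bx := Nat.le_self_pow two_ne_zero x
    have by' := Nat.le_self_pow two_ne_zero y
    have bz := Nat.le_self_pow two_ne_zero z
    refine ⟨⟨?_, ?_, ?_⟩, h1, h2, h3, h4, h5, h6⟩ <;> simp only [Nat.lt_add_one_iff] <;> linarith
  · tauto

lemma L3_card (k : ℕ) : L3 k = (L3F k).card := by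
  rw [L3, ← Set.ncard_coe_finset]
  congr 1
  ext ⟨x, y, z⟩
  simp only [Set.mem_setOf_eq, L3F, Finset.coe_filter, Finset.mem_product, Finset.mem_range]
  constructor
  · rintro ⟨h1, h2, h3, h4⟩
    have bx := Nat.le_self_pow two_ne_zero x
    have by' := Nat.le_self_pow two_ne_zero y
    have bz := Nat.le_self_pow two_ne_zero z
    refine ⟨⟨?_, ?_, ?_⟩, h1, h2, h3, h4⟩ <;> simp only [Nat.lt_add_one_iff] <;> linarith
  · tauto

lemma L2_card (k : ℕ) : L2 k = (L2F k).card := by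
  rw [L2, ← Set.ncard_coe_finset]
  congr 1
  ext ⟨x, y⟩
  simp only [Set.mem_setOf_eq, L2F, Finset.coe_filter, Finset.mem_product, Finset.mem_range]
  constructor
  · rintro ⟨h1, h2, h3⟩
    have bx := Nat.le_self_pow two_ne_zero x
    have by' := Nat.le_self_pow two_ne_zero y
    refine ⟨⟨?_, ?_⟩, h1, h2, h3⟩ <;> simp only [Nat.lt_add_one_iff] <;> linarith
  · tauto

lemma L12_card (k : ℕ) : L12 k = (L12F k).card := by
  rw [L12, ← Set.ncard_coe_finset]
  congr 1
  ext ⟨x, y⟩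
  simp only [Set.mem_setOf_eq, L12F, Finset.coe_filter, Finset.mem_product, Finset.mem_range]
  constructor
  · rintro ⟨h1, h2, h3, h4⟩
    have bx := Nat.le_self_pow two_ne_zero x
    have by' := Nat.le_self_pow two_ne_zero y
    refine ⟨⟨?_, ?_⟩, h1, h2, h3, h4⟩ <;> simp only [Nat.lt_add_one_iff] <;> linarith
  · tauto

lemma L13_card (k : ℕ) : L13 k = (L13F k).card := by
  rw [L13, ← Set.ncard_coe_finset]
  congr 1
  ext ⟨x, y⟩
  simp only [Set.mem_setOf_eq, L13F, Finset.coe_filter, Finset.mem_product, Finset.mem_range]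
  constructor
  · rintro ⟨h1, h2, h3, h4⟩
    have bx := Nat.le_self_pow two_ne_zero x
    have by' := Nat.le_self_pow two_ne_zero y
    refine ⟨⟨?_, ?_⟩, h1, h2, h3, h4⟩ <;> simp only [Nat.lt_add_one_iff] <;> linarith
  · tauto
lemma fin4_cases (u : Fin 4) : u = 0 ∨ u = 1 ∨ u = 2 ∨ u = 3 := by
  fin_cases u <;> decide

def tup (x y z v : ℕ) : Fin 4 → ℕ := fun t => if t = 0 then x else if t = 1 then y else if t = 2 then z else v
@[simp] lemma tup0 {x y z v : ℕ} : tup x y z v 0 = x := rfl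
@[simp] lemma tup1 {x y z v : ℕ} : tup x y z v 1 = y := rfl
@[simp] lemma tup2 {x y z v : ℕ} : tup x y z v 2 = z := rfl
@[simp] lemma tup3 {x y z v : ℕ} : tup x y z v 3 = v := rfl

lemma mem_class {k : ℕ} {h : Fin 4 → ℕ} {b : Bool × Bool × Bool × Bool}
    (hm : h ∈ (SN k).filter (fun h => cl h = b)) :
    (h 0 ^ 2 + h 1 ^ 2 + h 2 ^ 2 + h 3 ^ 2 = k) ∧ h 0 ≤ h 1 ∧ h 1 ≤ h 2 ∧ h 2 ≤ h 3
      ∧ h 0 < k + 1 ∧ h 1 < k + 1 ∧ h 2 < k + 1 ∧ h 3 < k + 1 ∧ cl h = b := by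
  simp only [SN, AN, Finset.mem_filter, Fintype.mem_piFinset, Finset.mem_range,
    Fin.sum_univ_four] at hm
  exact ⟨hm.1.1.2, hm.1.2.1, hm.1.2.2.1, hm.1.2.2.2, hm.1.1.1 0, hm.1.1.1 1, hm.1.1.1 2,
    hm.1.1.1 3, hm.2⟩

lemma mem_class_mk {k : ℕ} {b : Bool × Bool × Bool × Bool} (x y z v : ℕ)
    (hsum : x ^ 2 + y ^ 2 + z ^ 2 + v ^ 2 = k) (h01 : x ≤ y) (h12 : y ≤ z) (h23 : z ≤ v)
    (hcl : cl (tup x y z v) = b) :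
    tup x y z v ∈ (SN k).filter (fun h => cl h = b) := by
  have bx := Nat.le_self_pow two_ne_zero x
  have by' := Nat.le_self_pow two_ne_zero y
  have bz := Nat.le_self_pow two_ne_zero z
  have bv := Nat.le_self_pow two_ne_zero v
  simp only [SN, AN, Finset.mem_filter, Fintype.mem_piFinset, Finset.mem_range,
    Fin.sum_univ_four, tup0, tup1, tup2, tup3]
  refine ⟨⟨⟨?_, hsum⟩, h01, h12, h23⟩, hcl⟩
  intro a
  rcases fin4_cases a with rfl | rfl | rfl | rfl <;>
    simp only [tup0, tup1, tup2, tup3, Nat.lt_add_one_iff] <;> linarith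

lemma class_FFFF (k : ℕ) :
    ∑ h ∈ (SN k).filter (fun h => cl h = (false, false, false, false)),
      (Set.range fun σ : Equiv.Perm (Fin 4) => h ∘ σ).ncard * Wt h
    = 384 * (L4F k).card := by
  classical
  have hval : ∀ h ∈ (SN k).filter (fun h => cl h = (false, false, false, false)),
      (Set.range fun σ : Equiv.Perm (Fin 4) => h ∘ σ).ncard * Wt h = 384 := by
    intro h hm
    obtain ⟨hsum, h01, h12, h23, b0, b1, b2, b3, hcl⟩ := mem_class hm
    simp only [cl, Prod.mk.injEq, beq_iff_eq, beq_eq_false_iff_ne, Ne] at hcl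
    obtain ⟨hne0, hne01, hne12, hne23⟩ := hcl
    have hW : Wt h = 16 := by
      have n0 : ¬ h 0 = 0 := hne0
      have n1 : ¬ h 1 = 0 := by omega
      have n2 : ¬ h 2 = 0 := by omega
      have n3 : ¬ h 3 = 0 := by omega
      simp [Wt, Fin.prod_univ_four, n0, n1, n2, n3]
    have hR : (Set.range fun σ : Equiv.Perm (Fin 4) => h ∘ σ).ncard = 24 := by
      apply ncard_range_perm_inj
      intro t t' htt
      rcases fin4_cases t with rfl | rfl | rfl | rfl <;>
        rcases fin4_cases t' with rfl | rfl | rfl | rfl <;> first | rfl | (exfalso; omega)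
    rw [hR, hW]
  rw [Finset.sum_congr rfl hval, Finset.sum_const, smul_eq_mul, mul_comm]
  congr 1
  apply Finset.card_bij' (i := fun h _ => (h 0, h 1, h 2, h 3))
    (j := fun q _ => tup q.1 q.2.1 q.2.2.1 q.2.2.2)
  · intro h hm
    obtain ⟨hsum, h01, h12, h23, b0, b1, b2, b3, hcl⟩ := mem_class hm
    simp only [cl, Prod.mk.injEq, beq_iff_eq, beq_eq_false_iff_ne, Ne] at hcl
    simp only [L4F, Finset.mem_filter, Finset.mem_product, Finset.mem_range]
    refine ⟨⟨b0, b1, b2, b3⟩, ?_, ?_, ?_, ?_, hsum⟩ <;> omega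
  · intro q hq
    simp only [L4F, Finset.mem_filter, Finset.mem_product, Finset.mem_range] at hq
    obtain ⟨-, p1, p2, p3, p4, psum⟩ := hq
    apply mem_class_mk _ _ _ _ psum (by omega) (by omega) (by omega)
    simp only [cl, Prod.mk.injEq, tup0, tup1, tup2, tup3]
    refine ⟨?_, ?_, ?_, ?_⟩ <;> simp only [beq_iff_eq, beq_eq_false_iff_ne, Ne] <;> omega
  · intro h hm
    obtain ⟨hsum, h01, h12, h23, b0, b1, b2, b3, hcl⟩ := mem_class hm
    funext t
    rcases fin4_cases t with rfl | rfl | rfl | rfl <;> simp only [tup0, tup1, tup2, tup3]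
  · intro q hq
    rfl
lemma class_FTFF (k : ℕ) :
    ∑ h ∈ (SN k).filter (fun h => cl h = (false, true, false, false)),
      (Set.range fun σ : Equiv.Perm (Fin 4) => h ∘ σ).ncard * Wt h
    = 192 * (L112Fa k).card := by
  classical
  have hval : ∀ h ∈ (SN k).filter (fun h => cl h = (false, true, false, false)),
      (Set.range fun σ : Equiv.Perm (Fin 4) => h ∘ σ).ncard * Wt h = 192 := by
    intro h hm
    obtain ⟨hsum, h01, h12, h23, b0, b1, b2, b3, hcl⟩ := mem_class hm
    simp only [cl, Prod.mk.injEq, beq_iff_eq, beq_eq_false_iff_ne, Ne] at hcl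
    obtain ⟨c0, c1, c2, c3⟩ := hcl
    have hW : Wt h = 16 := by
      have n0 : ¬ h 0 = 0 := by omega
      have n1 : ¬ h 1 = 0 := by omega
      have n2 : ¬ h 2 = 0 := by omega
      have n3 : ¬ h 3 = 0 := by omega
      simp [Wt, Fin.prod_univ_four, n0, n1, n2, n3]
    have hR : (Set.range fun σ : Equiv.Perm (Fin 4) => h ∘ σ).ncard = 12 := by
      refine ncard_range_perm_pair h (h 0) (h 2) (h 3) 2 3 (by decide) rfl rfl ?_ (by omega) (by omega) (by omega)
      intro t ht1 ht2
      rcases fin4_cases t with rfl | rfl | rfl | rfl <;>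
        first | omega | exact absurd rfl ht1 | exact absurd rfl ht2
    rw [hR, hW]
  rw [Finset.sum_congr rfl hval, Finset.sum_const, smul_eq_mul, mul_comm]
  congr 1
  apply Finset.card_bij' (i := fun h _ => (h 2, h 3, h 0))
    (j := fun t _ => tup t.2.2 t.2.2 t.1 t.2.1)
  · intro h hm
    obtain ⟨hsum, h01, h12, h23, b0, b1, b2, b3, hcl⟩ := mem_class hm
    simp only [cl, Prod.mk.injEq, beq_iff_eq, beq_eq_false_iff_ne, Ne] at hcl
    obtain ⟨c0, c1, c2, c3⟩ := hcl
    have s01 : h 0 ^ 2 = h 1 ^ 2 := by rw [c1]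
    simp only [L112Fa, L112F, Finset.mem_filter, Finset.mem_product, Finset.mem_range]
    repeat' apply And.intro
    all_goals first | omega | linarith
  · intro t hq
    simp only [L112Fa, L112F, Finset.mem_filter, Finset.mem_product, Finset.mem_range] at hq
    refine mem_class_mk _ _ _ _ (by linarith [hq]) (by omega) (by omega) (by omega) ?_
    simp only [cl, Prod.mk.injEq, tup0, tup1, tup2, tup3]
    refine ⟨?_, ?_, ?_, ?_⟩ <;> simp only [beq_iff_eq, beq_eq_false_iff_ne, Ne] <;> omega
  · intro h hm
    obtain ⟨hsum, h01, h12, h23, b0, b1, b2, b3, hcl⟩ := mem_class hm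
    simp only [cl, Prod.mk.injEq, beq_iff_eq, beq_eq_false_iff_ne, Ne] at hcl
    obtain ⟨c0, c1, c2, c3⟩ := hcl
    funext t
    rcases fin4_cases t with rfl | rfl | rfl | rfl <;>
      simp only [tup0, tup1, tup2, tup3] <;> omega
  · intro t hq
    rfl

lemma class_FFTF (k : ℕ) :
    ∑ h ∈ (SN k).filter (fun h => cl h = (false, false, true, false)),
      (Set.range fun σ : Equiv.Perm (Fin 4) => h ∘ σ).ncard * Wt h
    = 192 * (L112Fb k).card := by
  classical
  have hval : ∀ h ∈ (SN k).filter (fun h => cl h = (false, false, true, false)),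
      (Set.range fun σ : Equiv.Perm (Fin 4) => h ∘ σ).ncard * Wt h = 192 := by
    intro h hm
    obtain ⟨hsum, h01, h12, h23, b0, b1, b2, b3, hcl⟩ := mem_class hm
    simp only [cl, Prod.mk.injEq, beq_iff_eq, beq_eq_false_iff_ne, Ne] at hcl
    obtain ⟨c0, c1, c2, c3⟩ := hcl
    have hW : Wt h = 16 := by
      have n0 : ¬ h 0 = 0 := by omega
      have n1 : ¬ h 1 = 0 := by omega
      have n2 : ¬ h 2 = 0 := by omega
      have n3 : ¬ h 3 = 0 := by omega
      simp [Wt, Fin.prod_univ_four, n0, n1, n2, n3]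
    have hR : (Set.range fun σ : Equiv.Perm (Fin 4) => h ∘ σ).ncard = 12 := by
      refine ncard_range_perm_pair h (h 1) (h 0) (h 3) 0 3 (by decide) rfl rfl ?_ (by omega) (by omega) (by omega)
      intro t ht1 ht2
      rcases fin4_cases t with rfl | rfl | rfl | rfl <;>
        first | omega | exact absurd rfl ht1 | exact absurd rfl ht2
    rw [hR, hW]
  rw [Finset.sum_congr rfl hval, Finset.sum_const, smul_eq_mul, mul_comm]
  congr 1
  apply Finset.card_bij' (i := fun h _ => (h 0, h 3, h 1))
    (j := fun t _ => tup t.1 t.2.2 t.2.2 t.2.1)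
  · intro h hm
    obtain ⟨hsum, h01, h12, h23, b0, b1, b2, b3, hcl⟩ := mem_class hm
    simp only [cl, Prod.mk.injEq, beq_iff_eq, beq_eq_false_iff_ne, Ne] at hcl
    obtain ⟨c0, c1, c2, c3⟩ := hcl
    have s12 : h 1 ^ 2 = h 2 ^ 2 := by rw [c2]
    simp only [L112Fb, L112Fbc, L112F, Finset.mem_filter, Finset.mem_product, Finset.mem_range]
    repeat' apply And.intro
    all_goals first | omega | linarith
  · intro t hq
    simp only [L112Fb, L112Fbc, L112F, Finset.mem_filter, Finset.mem_product, Finset.mem_range] at hq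
    refine mem_class_mk _ _ _ _ (by linarith [hq]) (by omega) (by omega) (by omega) ?_
    simp only [cl, Prod.mk.injEq, tup0, tup1, tup2, tup3]
    refine ⟨?_, ?_, ?_, ?_⟩ <;> simp only [beq_iff_eq, beq_eq_false_iff_ne, Ne] <;> omega
  · intro h hm
    obtain ⟨hsum, h01, h12, h23, b0, b1, b2, b3, hcl⟩ := mem_class hm
    simp only [cl, Prod.mk.injEq, beq_iff_eq, beq_eq_false_iff_ne, Ne] at hcl
    obtain ⟨c0, c1, c2, c3⟩ := hcl
    funext t
    rcases fin4_cases t with rfl | rfl | rfl | rfl <;>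
      simp only [tup0, tup1, tup2, tup3] <;> omega
  · intro t hq
    rfl

lemma class_FFFT (k : ℕ) :
    ∑ h ∈ (SN k).filter (fun h => cl h = (false, false, false, true)),
      (Set.range fun σ : Equiv.Perm (Fin 4) => h ∘ σ).ncard * Wt h
    = 192 * (L112Fc k).card := by
  classical
  have hval : ∀ h ∈ (SN k).filter (fun h => cl h = (false, false, false, true)),
      (Set.range fun σ : Equiv.Perm (Fin 4) => h ∘ σ).ncard * Wt h = 192 := by
    intro h hm
    obtain ⟨hsum, h01, h12, h23, b0, b1, b2, b3, hcl⟩ := mem_class hm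
    simp only [cl, Prod.mk.injEq, beq_iff_eq, beq_eq_false_iff_ne, Ne] at hcl
    obtain ⟨c0, c1, c2, c3⟩ := hcl
    have hW : Wt h = 16 := by
      have n0 : ¬ h 0 = 0 := by omega
      have n1 : ¬ h 1 = 0 := by omega
      have n2 : ¬ h 2 = 0 := by omega
      have n3 : ¬ h 3 = 0 := by omega
      simp [Wt, Fin.prod_univ_four, n0, n1, n2, n3]
    have hR : (Set.range fun σ : Equiv.Perm (Fin 4) => h ∘ σ).ncard = 12 := by
      refine ncard_range_perm_pair h (h 2) (h 0) (h 1) 0 1 (by decide) rfl rfl ?_ (by omega) (by omega) (by omega)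
      intro t ht1 ht2
      rcases fin4_cases t with rfl | rfl | rfl | rfl <;>
        first | omega | exact absurd rfl ht1 | exact absurd rfl ht2
    rw [hR, hW]
  rw [Finset.sum_congr rfl hval, Finset.sum_const, smul_eq_mul, mul_comm]
  congr 1
  apply Finset.card_bij' (i := fun h _ => (h 0, h 1, h 2))
    (j := fun t _ => tup t.1 t.2.1 t.2.2 t.2.2)
  · intro h hm
    obtain ⟨hsum, h01, h12, h23, b0, b1, b2, b3, hcl⟩ := mem_class hm
    simp only [cl, Prod.mk.injEq, beq_iff_eq, beq_eq_false_iff_ne, Ne] at hcl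
    obtain ⟨c0, c1, c2, c3⟩ := hcl
    have s23 : h 2 ^ 2 = h 3 ^ 2 := by rw [c3]
    simp only [L112Fc, L112Fbc, L112F, Finset.mem_filter, Finset.mem_product, Finset.mem_range]
    repeat' apply And.intro
    all_goals first | omega | linarith
  · intro t hq
    simp only [L112Fc, L112Fbc, L112F, Finset.mem_filter, Finset.mem_product, Finset.mem_range] at hq
    refine mem_class_mk _ _ _ _ (by linarith [hq]) (by omega) (by omega) (by omega) ?_
    simp only [cl, Prod.mk.injEq, tup0, tup1, tup2, tup3]
    refine ⟨?_, ?_, ?_, ?_⟩ <;> simp only [beq_iff_eq, beq_eq_false_iff_ne, Ne] <;> omega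
  · intro h hm
    obtain ⟨hsum, h01, h12, h23, b0, b1, b2, b3, hcl⟩ := mem_class hm
    simp only [cl, Prod.mk.injEq, beq_iff_eq, beq_eq_false_iff_ne, Ne] at hcl
    obtain ⟨c0, c1, c2, c3⟩ := hcl
    funext t
    rcases fin4_cases t with rfl | rfl | rfl | rfl <;>
      simp only [tup0, tup1, tup2, tup3] <;> omega
  · intro t hq
    rfl

lemma class_FTTF (k : ℕ) :
    ∑ h ∈ (SN k).filter (fun h => cl h = (false, true, true, false)),
      (Set.range fun σ : Equiv.Perm (Fin 4) => h ∘ σ).ncard * Wt h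
    = 64 * (L13Fb k).card := by
  classical
  have hval : ∀ h ∈ (SN k).filter (fun h => cl h = (false, true, true, false)),
      (Set.range fun σ : Equiv.Perm (Fin 4) => h ∘ σ).ncard * Wt h = 64 := by
    intro h hm
    obtain ⟨hsum, h01, h12, h23, b0, b1, b2, b3, hcl⟩ := mem_class hm
    simp only [cl, Prod.mk.injEq, beq_iff_eq, beq_eq_false_iff_ne, Ne] at hcl
    obtain ⟨c0, c1, c2, c3⟩ := hcl
    have hW : Wt h = 16 := by
      have n0 : ¬ h 0 = 0 := by omega
      have n1 : ¬ h 1 = 0 := by omega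
      have n2 : ¬ h 2 = 0 := by omega
      have n3 : ¬ h 3 = 0 := by omega
      simp [Wt, Fin.prod_univ_four, n0, n1, n2, n3]
    have hR : (Set.range fun σ : Equiv.Perm (Fin 4) => h ∘ σ).ncard = 4 := by
      refine ncard_range_perm_triple h (h 0) (h 3) 3 rfl ?_ (by omega)
      intro t ht
      rcases fin4_cases t with rfl | rfl | rfl | rfl <;>
        first | omega | exact absurd rfl ht
    rw [hR, hW]
  rw [Finset.sum_congr rfl hval, Finset.sum_const, smul_eq_mul, mul_comm]
  congr 1
  apply Finset.card_bij' (i := fun h _ => (h 3, h 0))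
    (j := fun p _ => tup p.2 p.2 p.2 p.1)
  · intro h hm
    obtain ⟨hsum, h01, h12, h23, b0, b1, b2, b3, hcl⟩ := mem_class hm
    simp only [cl, Prod.mk.injEq, beq_iff_eq, beq_eq_false_iff_ne, Ne] at hcl
    obtain ⟨c0, c1, c2, c3⟩ := hcl
    have s01 : h 0 ^ 2 = h 1 ^ 2 := by rw [c1]
    have s12 : h 1 ^ 2 = h 2 ^ 2 := by rw [c2]
    simp only [L13Fb, L13F, Finset.mem_filter, Finset.mem_product, Finset.mem_range]
    repeat' apply And.intro
    all_goals first | omega | linarith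
  · intro p hq
    simp only [L13Fb, L13F, Finset.mem_filter, Finset.mem_product, Finset.mem_range] at hq
    refine mem_class_mk _ _ _ _ (by linarith [hq]) (by omega) (by omega) (by omega) ?_
    simp only [cl, Prod.mk.injEq, tup0, tup1, tup2, tup3]
    refine ⟨?_, ?_, ?_, ?_⟩ <;> simp only [beq_iff_eq, beq_eq_false_iff_ne, Ne] <;> omega
  · intro h hm
    obtain ⟨hsum, h01, h12, h23, b0, b1, b2, b3, hcl⟩ := mem_class hm
    simp only [cl, Prod.mk.injEq, beq_iff_eq, beq_eq_false_iff_ne, Ne] at hcl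
    obtain ⟨c0, c1, c2, c3⟩ := hcl
    funext t
    rcases fin4_cases t with rfl | rfl | rfl | rfl <;>
      simp only [tup0, tup1, tup2, tup3] <;> omega
  · intro p hq
    rfl

lemma class_FFTT (k : ℕ) :
    ∑ h ∈ (SN k).filter (fun h => cl h = (false, false, true, true)),
      (Set.range fun σ : Equiv.Perm (Fin 4) => h ∘ σ).ncard * Wt h
    = 64 * (L13Fa k).card := by
  classical
  have hval : ∀ h ∈ (SN k).filter (fun h => cl h = (false, false, true, true)),
      (Set.range fun σ : Equiv.Perm (Fin 4) => h ∘ σ).ncard * Wt h = 64 := by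
    intro h hm
    obtain ⟨hsum, h01, h12, h23, b0, b1, b2, b3, hcl⟩ := mem_class hm
    simp only [cl, Prod.mk.injEq, beq_iff_eq, beq_eq_false_iff_ne, Ne] at hcl
    obtain ⟨c0, c1, c2, c3⟩ := hcl
    have hW : Wt h = 16 := by
      have n0 : ¬ h 0 = 0 := by omega
      have n1 : ¬ h 1 = 0 := by omega
      have n2 : ¬ h 2 = 0 := by omega
      have n3 : ¬ h 3 = 0 := by omega
      simp [Wt, Fin.prod_univ_four, n0, n1, n2, n3]
    have hR : (Set.range fun σ : Equiv.Perm (Fin 4) => h ∘ σ).ncard = 4 := by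
      refine ncard_range_perm_triple h (h 1) (h 0) 0 rfl ?_ (by omega)
      intro t ht
      rcases fin4_cases t with rfl | rfl | rfl | rfl <;>
        first | omega | exact absurd rfl ht
    rw [hR, hW]
  rw [Finset.sum_congr rfl hval, Finset.sum_const, smul_eq_mul, mul_comm]
  congr 1
  apply Finset.card_bij' (i := fun h _ => (h 0, h 1))
    (j := fun p _ => tup p.1 p.2 p.2 p.2)
  · intro h hm
    obtain ⟨hsum, h01, h12, h23, b0, b1, b2, b3, hcl⟩ := mem_class hm
    simp only [cl, Prod.mk.injEq, beq_iff_eq, beq_eq_false_iff_ne, Ne] at hcl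
    obtain ⟨c0, c1, c2, c3⟩ := hcl
    have s12 : h 1 ^ 2 = h 2 ^ 2 := by rw [c2]
    have s23 : h 2 ^ 2 = h 3 ^ 2 := by rw [c3]
    simp only [L13Fa, L13F, Finset.mem_filter, Finset.mem_product, Finset.mem_range]
    repeat' apply And.intro
    all_goals first | omega | linarith
  · intro p hq
    simp only [L13Fa, L13F, Finset.mem_filter, Finset.mem_product, Finset.mem_range] at hq
    refine mem_class_mk _ _ _ _ (by linarith [hq]) (by omega) (by omega) (by omega) ?_
    simp only [cl, Prod.mk.injEq, tup0, tup1, tup2, tup3]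
    refine ⟨?_, ?_, ?_, ?_⟩ <;> simp only [beq_iff_eq, beq_eq_false_iff_ne, Ne] <;> omega
  · intro h hm
    obtain ⟨hsum, h01, h12, h23, b0, b1, b2, b3, hcl⟩ := mem_class hm
    simp only [cl, Prod.mk.injEq, beq_iff_eq, beq_eq_false_iff_ne, Ne] at hcl
    obtain ⟨c0, c1, c2, c3⟩ := hcl
    funext t
    rcases fin4_cases t with rfl | rfl | rfl | rfl <;>
      simp only [tup0, tup1, tup2, tup3] <;> omega
  · intro p hq
    rfl

lemma class_FTTT (k : ℕ) :
    ∑ h ∈ (SN k).filter (fun h => cl h = (false, true, true, true)),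
      (Set.range fun σ : Equiv.Perm (Fin 4) => h ∘ σ).ncard * Wt h
    = 16 * (SQF 4 k).card := by
  classical
  have hval : ∀ h ∈ (SN k).filter (fun h => cl h = (false, true, true, true)),
      (Set.range fun σ : Equiv.Perm (Fin 4) => h ∘ σ).ncard * Wt h = 16 := by
    intro h hm
    obtain ⟨hsum, h01, h12, h23, b0, b1, b2, b3, hcl⟩ := mem_class hm
    simp only [cl, Prod.mk.injEq, beq_iff_eq, beq_eq_false_iff_ne, Ne] at hcl
    obtain ⟨c0, c1, c2, c3⟩ := hcl
    have hW : Wt h = 16 := by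
      have n0 : ¬ h 0 = 0 := by omega
      have n1 : ¬ h 1 = 0 := by omega
      have n2 : ¬ h 2 = 0 := by omega
      have n3 : ¬ h 3 = 0 := by omega
      simp [Wt, Fin.prod_univ_four, n0, n1, n2, n3]
    have hR : (Set.range fun σ : Equiv.Perm (Fin 4) => h ∘ σ).ncard = 1 := by
      refine ncard_range_perm_const h (h 0) ?_
      intro t
      rcases fin4_cases t with rfl | rfl | rfl | rfl <;> omega
    rw [hR, hW]
  rw [Finset.sum_congr rfl hval, Finset.sum_const, smul_eq_mul, mul_comm]
  congr 1
  apply Finset.card_bij' (i := fun h _ => h 0)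
    (j := fun d _ => tup d d d d)
  · intro h hm
    obtain ⟨hsum, h01, h12, h23, b0, b1, b2, b3, hcl⟩ := mem_class hm
    simp only [cl, Prod.mk.injEq, beq_iff_eq, beq_eq_false_iff_ne, Ne] at hcl
    obtain ⟨c0, c1, c2, c3⟩ := hcl
    have s01 : h 0 ^ 2 = h 1 ^ 2 := by rw [c1]
    have s12 : h 1 ^ 2 = h 2 ^ 2 := by rw [c2]
    have s23 : h 2 ^ 2 = h 3 ^ 2 := by rw [c3]
    simp only [SQF, Finset.mem_filter, Finset.mem_product, Finset.mem_range]
    repeat' apply And.intro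
    all_goals first | omega | linarith
  · intro d hq
    simp only [SQF, Finset.mem_filter, Finset.mem_product, Finset.mem_range] at hq
    refine mem_class_mk _ _ _ _ (by linarith [hq]) (by omega) (by omega) (by omega) ?_
    simp only [cl, Prod.mk.injEq, tup0, tup1, tup2, tup3]
    refine ⟨?_, ?_, ?_, ?_⟩ <;> simp only [beq_iff_eq, beq_eq_false_iff_ne, Ne] <;> omega
  · intro h hm
    obtain ⟨hsum, h01, h12, h23, b0, b1, b2, b3, hcl⟩ := mem_class hm
    simp only [cl, Prod.mk.injEq, beq_iff_eq, beq_eq_false_iff_ne, Ne] at hcl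
    obtain ⟨c0, c1, c2, c3⟩ := hcl
    funext t
    rcases fin4_cases t with rfl | rfl | rfl | rfl <;>
      simp only [tup0, tup1, tup2, tup3] <;> omega
  · intro d hq
    rfl

lemma class_TFFF (k : ℕ) :
    ∑ h ∈ (SN k).filter (fun h => cl h = (true, false, false, false)),
      (Set.range fun σ : Equiv.Perm (Fin 4) => h ∘ σ).ncard * Wt h
    = 192 * (L3F k).card := by
  classical
  have hval : ∀ h ∈ (SN k).filter (fun h => cl h = (true, false, false, false)),
      (Set.range fun σ : Equiv.Perm (Fin 4) => h ∘ σ).ncard * Wt h = 192 := by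
    intro h hm
    obtain ⟨hsum, h01, h12, h23, b0, b1, b2, b3, hcl⟩ := mem_class hm
    simp only [cl, Prod.mk.injEq, beq_iff_eq, beq_eq_false_iff_ne, Ne] at hcl
    obtain ⟨c0, c1, c2, c3⟩ := hcl
    have hW : Wt h = 8 := by
      have z0 : h 0 = 0 := by omega
      have n1 : ¬ h 1 = 0 := by omega
      have n2 : ¬ h 2 = 0 := by omega
      have n3 : ¬ h 3 = 0 := by omega
      simp [Wt, Fin.prod_univ_four, z0, n1, n2, n3]
    have hR : (Set.range fun σ : Equiv.Perm (Fin 4) => h ∘ σ).ncard = 24 := by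
      apply ncard_range_perm_inj
      intro t t' htt
      rcases fin4_cases t with rfl | rfl | rfl | rfl <;>
        rcases fin4_cases t' with rfl | rfl | rfl | rfl <;> first | rfl | (exfalso; omega)
    rw [hR, hW]
  rw [Finset.sum_congr rfl hval, Finset.sum_const, smul_eq_mul, mul_comm]
  congr 1
  apply Finset.card_bij' (i := fun h _ => (h 1, h 2, h 3))
    (j := fun t _ => tup 0 t.1 t.2.1 t.2.2)
  · intro h hm
    obtain ⟨hsum, h01, h12, h23, b0, b1, b2, b3, hcl⟩ := mem_class hm
    simp only [cl, Prod.mk.injEq, beq_iff_eq, beq_eq_false_iff_ne, Ne] at hcl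
    obtain ⟨c0, c1, c2, c3⟩ := hcl
    have zz0 : h 0 = 0 := by omega
    have s0 : h 0 ^ 2 = 0 := by simp [zz0]
    simp only [L3F, Finset.mem_filter, Finset.mem_product, Finset.mem_range]
    repeat' apply And.intro
    all_goals first | omega | linarith
  · intro t hq
    simp only [L3F, Finset.mem_filter, Finset.mem_product, Finset.mem_range] at hq
    refine mem_class_mk _ _ _ _ (by linarith [hq]) (by omega) (by omega) (by omega) ?_
    simp only [cl, Prod.mk.injEq, tup0, tup1, tup2, tup3]
    refine ⟨?_, ?_, ?_, ?_⟩ <;> simp only [beq_iff_eq, beq_eq_false_iff_ne, Ne] <;> omega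
  · intro h hm
    obtain ⟨hsum, h01, h12, h23, b0, b1, b2, b3, hcl⟩ := mem_class hm
    simp only [cl, Prod.mk.injEq, beq_iff_eq, beq_eq_false_iff_ne, Ne] at hcl
    obtain ⟨c0, c1, c2, c3⟩ := hcl
    funext t
    rcases fin4_cases t with rfl | rfl | rfl | rfl <;>
      simp only [tup0, tup1, tup2, tup3] <;> omega
  · intro t hq
    rfl

lemma class_TFTF (k : ℕ) :
    ∑ h ∈ (SN k).filter (fun h => cl h = (true, false, true, false)),
      (Set.range fun σ : Equiv.Perm (Fin 4) => h ∘ σ).ncard * Wt h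
    = 96 * (L12Fb k).card := by
  classical
  have hval : ∀ h ∈ (SN k).filter (fun h => cl h = (true, false, true, false)),
      (Set.range fun σ : Equiv.Perm (Fin 4) => h ∘ σ).ncard * Wt h = 96 := by
    intro h hm
    obtain ⟨hsum, h01, h12, h23, b0, b1, b2, b3, hcl⟩ := mem_class hm
    simp only [cl, Prod.mk.injEq, beq_iff_eq, beq_eq_false_iff_ne, Ne] at hcl
    obtain ⟨c0, c1, c2, c3⟩ := hcl
    have hW : Wt h = 8 := by
      have z0 : h 0 = 0 := by omega
      have n1 : ¬ h 1 = 0 := by omega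
      have n2 : ¬ h 2 = 0 := by omega
      have n3 : ¬ h 3 = 0 := by omega
      simp [Wt, Fin.prod_univ_four, z0, n1, n2, n3]
    have hR : (Set.range fun σ : Equiv.Perm (Fin 4) => h ∘ σ).ncard = 12 := by
      refine ncard_range_perm_pair h (h 1) (h 0) (h 3) 0 3 (by decide) rfl rfl ?_ (by omega) (by omega) (by omega)
      intro t ht1 ht2
      rcases fin4_cases t with rfl | rfl | rfl | rfl <;>
        first | omega | exact absurd rfl ht1 | exact absurd rfl ht2
    rw [hR, hW]
  rw [Finset.sum_congr rfl hval, Finset.sum_const, smul_eq_mul, mul_comm]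
  congr 1
  apply Finset.card_bij' (i := fun h _ => (h 3, h 1))
    (j := fun p _ => tup 0 p.2 p.2 p.1)
  · intro h hm
    obtain ⟨hsum, h01, h12, h23, b0, b1, b2, b3, hcl⟩ := mem_class hm
    simp only [cl, Prod.mk.injEq, beq_iff_eq, beq_eq_false_iff_ne, Ne] at hcl
    obtain ⟨c0, c1, c2, c3⟩ := hcl
    have zz0 : h 0 = 0 := by omega
    have s0 : h 0 ^ 2 = 0 := by simp [zz0]
    have s12 : h 1 ^ 2 = h 2 ^ 2 := by rw [c2]
    simp only [L12Fb, L12F, Finset.mem_filter, Finset.mem_product, Finset.mem_range]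
    repeat' apply And.intro
    all_goals first | omega | linarith
  · intro p hq
    simp only [L12Fb, L12F, Finset.mem_filter, Finset.mem_product, Finset.mem_range] at hq
    refine mem_class_mk _ _ _ _ (by linarith [hq]) (by omega) (by omega) (by omega) ?_
    simp only [cl, Prod.mk.injEq, tup0, tup1, tup2, tup3]
    refine ⟨?_, ?_, ?_, ?_⟩ <;> simp only [beq_iff_eq, beq_eq_false_iff_ne, Ne] <;> omega
  · intro h hm
    obtain ⟨hsum, h01, h12, h23, b0, b1, b2, b3, hcl⟩ := mem_class hm
    simp only [cl, Prod.mk.injEq, beq_iff_eq, beq_eq_false_iff_ne, Ne] at hcl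
    obtain ⟨c0, c1, c2, c3⟩ := hcl
    funext t
    rcases fin4_cases t with rfl | rfl | rfl | rfl <;>
      simp only [tup0, tup1, tup2, tup3] <;> omega
  · intro p hq
    rfl

lemma class_TFFT (k : ℕ) :
    ∑ h ∈ (SN k).filter (fun h => cl h = (true, false, false, true)),
      (Set.range fun σ : Equiv.Perm (Fin 4) => h ∘ σ).ncard * Wt h
    = 96 * (L12Fa k).card := by
  classical
  have hval : ∀ h ∈ (SN k).filter (fun h => cl h = (true, false, false, true)),
      (Set.range fun σ : Equiv.Perm (Fin 4) => h ∘ σ).ncard * Wt h = 96 := by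
    intro h hm
    obtain ⟨hsum, h01, h12, h23, b0, b1, b2, b3, hcl⟩ := mem_class hm
    simp only [cl, Prod.mk.injEq, beq_iff_eq, beq_eq_false_iff_ne, Ne] at hcl
    obtain ⟨c0, c1, c2, c3⟩ := hcl
    have hW : Wt h = 8 := by
      have z0 : h 0 = 0 := by omega
      have n1 : ¬ h 1 = 0 := by omega
      have n2 : ¬ h 2 = 0 := by omega
      have n3 : ¬ h 3 = 0 := by omega
      simp [Wt, Fin.prod_univ_four, z0, n1, n2, n3]
    have hR : (Set.range fun σ : Equiv.Perm (Fin 4) => h ∘ σ).ncard = 12 := by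
      refine ncard_range_perm_pair h (h 2) (h 0) (h 1) 0 1 (by decide) rfl rfl ?_ (by omega) (by omega) (by omega)
      intro t ht1 ht2
      rcases fin4_cases t with rfl | rfl | rfl | rfl <;>
        first | omega | exact absurd rfl ht1 | exact absurd rfl ht2
    rw [hR, hW]
  rw [Finset.sum_congr rfl hval, Finset.sum_const, smul_eq_mul, mul_comm]
  congr 1
  apply Finset.card_bij' (i := fun h _ => (h 1, h 2))
    (j := fun p _ => tup 0 p.1 p.2 p.2)
  · intro h hm
    obtain ⟨hsum, h01, h12, h23, b0, b1, b2, b3, hcl⟩ := mem_class hm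
    simp only [cl, Prod.mk.injEq, beq_iff_eq, beq_eq_false_iff_ne, Ne] at hcl
    obtain ⟨c0, c1, c2, c3⟩ := hcl
    have zz0 : h 0 = 0 := by omega
    have s0 : h 0 ^ 2 = 0 := by simp [zz0]
    have s23 : h 2 ^ 2 = h 3 ^ 2 := by rw [c3]
    simp only [L12Fa, L12F, Finset.mem_filter, Finset.mem_product, Finset.mem_range]
    repeat' apply And.intro
    all_goals first | omega | linarith
  · intro p hq
    simp only [L12Fa, L12F, Finset.mem_filter, Finset.mem_product, Finset.mem_range] at hq
    refine mem_class_mk _ _ _ _ (by linarith [hq]) (by omega) (by omega) (by omega) ?_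
    simp only [cl, Prod.mk.injEq, tup0, tup1, tup2, tup3]
    refine ⟨?_, ?_, ?_, ?_⟩ <;> simp only [beq_iff_eq, beq_eq_false_iff_ne, Ne] <;> omega
  · intro h hm
    obtain ⟨hsum, h01, h12, h23, b0, b1, b2, b3, hcl⟩ := mem_class hm
    simp only [cl, Prod.mk.injEq, beq_iff_eq, beq_eq_false_iff_ne, Ne] at hcl
    obtain ⟨c0, c1, c2, c3⟩ := hcl
    funext t
    rcases fin4_cases t with rfl | rfl | rfl | rfl <;>
      simp only [tup0, tup1, tup2, tup3] <;> omega
  · intro p hq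
    rfl

lemma class_TFTT (k : ℕ) :
    ∑ h ∈ (SN k).filter (fun h => cl h = (true, false, true, true)),
      (Set.range fun σ : Equiv.Perm (Fin 4) => h ∘ σ).ncard * Wt h
    = 32 * (SQF 3 k).card := by
  classical
  have hval : ∀ h ∈ (SN k).filter (fun h => cl h = (true, false, true, true)),
      (Set.range fun σ : Equiv.Perm (Fin 4) => h ∘ σ).ncard * Wt h = 32 := by
    intro h hm
    obtain ⟨hsum, h01, h12, h23, b0, b1, b2, b3, hcl⟩ := mem_class hm
    simp only [cl, Prod.mk.injEq, beq_iff_eq, beq_eq_false_iff_ne, Ne] at hcl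
    obtain ⟨c0, c1, c2, c3⟩ := hcl
    have hW : Wt h = 8 := by
      have z0 : h 0 = 0 := by omega
      have n1 : ¬ h 1 = 0 := by omega
      have n2 : ¬ h 2 = 0 := by omega
      have n3 : ¬ h 3 = 0 := by omega
      simp [Wt, Fin.prod_univ_four, z0, n1, n2, n3]
    have hR : (Set.range fun σ : Equiv.Perm (Fin 4) => h ∘ σ).ncard = 4 := by
      refine ncard_range_perm_triple h (h 1) (h 0) 0 rfl ?_ (by omega)
      intro t ht
      rcases fin4_cases t with rfl | rfl | rfl | rfl <;>
        first | omega | exact absurd rfl ht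
    rw [hR, hW]
  rw [Finset.sum_congr rfl hval, Finset.sum_const, smul_eq_mul, mul_comm]
  congr 1
  apply Finset.card_bij' (i := fun h _ => h 1)
    (j := fun d _ => tup 0 d d d)
  · intro h hm
    obtain ⟨hsum, h01, h12, h23, b0, b1, b2, b3, hcl⟩ := mem_class hm
    simp only [cl, Prod.mk.injEq, beq_iff_eq, beq_eq_false_iff_ne, Ne] at hcl
    obtain ⟨c0, c1, c2, c3⟩ := hcl
    have zz0 : h 0 = 0 := by omega
    have s0 : h 0 ^ 2 = 0 := by simp [zz0]
    have s12 : h 1 ^ 2 = h 2 ^ 2 := by rw [c2]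
    have s23 : h 2 ^ 2 = h 3 ^ 2 := by rw [c3]
    simp only [SQF, Finset.mem_filter, Finset.mem_product, Finset.mem_range]
    repeat' apply And.intro
    all_goals first | omega | linarith
  · intro d hq
    simp only [SQF, Finset.mem_filter, Finset.mem_product, Finset.mem_range] at hq
    refine mem_class_mk _ _ _ _ (by linarith [hq]) (by omega) (by omega) (by omega) ?_
    simp only [cl, Prod.mk.injEq, tup0, tup1, tup2, tup3]
    refine ⟨?_, ?_, ?_, ?_⟩ <;> simp only [beq_iff_eq, beq_eq_false_iff_ne, Ne] <;> omega
  · intro h hm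
    obtain ⟨hsum, h01, h12, h23, b0, b1, b2, b3, hcl⟩ := mem_class hm
    simp only [cl, Prod.mk.injEq, beq_iff_eq, beq_eq_false_iff_ne, Ne] at hcl
    obtain ⟨c0, c1, c2, c3⟩ := hcl
    funext t
    rcases fin4_cases t with rfl | rfl | rfl | rfl <;>
      simp only [tup0, tup1, tup2, tup3] <;> omega
  · intro d hq
    rfl

lemma class_TTFF (k : ℕ) :
    ∑ h ∈ (SN k).filter (fun h => cl h = (true, true, false, false)),
      (Set.range fun σ : Equiv.Perm (Fin 4) => h ∘ σ).ncard * Wt h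
    = 48 * (L2F k).card := by
  classical
  have hval : ∀ h ∈ (SN k).filter (fun h => cl h = (true, true, false, false)),
      (Set.range fun σ : Equiv.Perm (Fin 4) => h ∘ σ).ncard * Wt h = 48 := by
    intro h hm
    obtain ⟨hsum, h01, h12, h23, b0, b1, b2, b3, hcl⟩ := mem_class hm
    simp only [cl, Prod.mk.injEq, beq_iff_eq, beq_eq_false_iff_ne, Ne] at hcl
    obtain ⟨c0, c1, c2, c3⟩ := hcl
    have hW : Wt h = 4 := by
      have z0 : h 0 = 0 := by omega
      have z1 : h 1 = 0 := by omega
      have n2 : ¬ h 2 = 0 := by omega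
      have n3 : ¬ h 3 = 0 := by omega
      simp [Wt, Fin.prod_univ_four, z0, z1, n2, n3]
    have hR : (Set.range fun σ : Equiv.Perm (Fin 4) => h ∘ σ).ncard = 12 := by
      refine ncard_range_perm_pair h (h 0) (h 2) (h 3) 2 3 (by decide) rfl rfl ?_ (by omega) (by omega) (by omega)
      intro t ht1 ht2
      rcases fin4_cases t with rfl | rfl | rfl | rfl <;>
        first | omega | exact absurd rfl ht1 | exact absurd rfl ht2
    rw [hR, hW]
  rw [Finset.sum_congr rfl hval, Finset.sum_const, smul_eq_mul, mul_comm]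
  congr 1
  apply Finset.card_bij' (i := fun h _ => (h 2, h 3))
    (j := fun p _ => tup 0 0 p.1 p.2)
  · intro h hm
    obtain ⟨hsum, h01, h12, h23, b0, b1, b2, b3, hcl⟩ := mem_class hm
    simp only [cl, Prod.mk.injEq, beq_iff_eq, beq_eq_false_iff_ne, Ne] at hcl
    obtain ⟨c0, c1, c2, c3⟩ := hcl
    have zz0 : h 0 = 0 := by omega
    have s0 : h 0 ^ 2 = 0 := by simp [zz0]
    have zz1 : h 1 = 0 := by omega
    have s1 : h 1 ^ 2 = 0 := by simp [zz1]
    simp only [L2F, Finset.mem_filter, Finset.mem_product, Finset.mem_range]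
    repeat' apply And.intro
    all_goals first | omega | linarith
  · intro p hq
    simp only [L2F, Finset.mem_filter, Finset.mem_product, Finset.mem_range] at hq
    refine mem_class_mk _ _ _ _ (by linarith [hq]) (by omega) (by omega) (by omega) ?_
    simp only [cl, Prod.mk.injEq, tup0, tup1, tup2, tup3]
    refine ⟨?_, ?_, ?_, ?_⟩ <;> simp only [beq_iff_eq, beq_eq_false_iff_ne, Ne] <;> omega
  · intro h hm
    obtain ⟨hsum, h01, h12, h23, b0, b1, b2, b3, hcl⟩ := mem_class hm
    simp only [cl, Prod.mk.injEq, beq_iff_eq, beq_eq_false_iff_ne, Ne] at hcl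
    obtain ⟨c0, c1, c2, c3⟩ := hcl
    funext t
    rcases fin4_cases t with rfl | rfl | rfl | rfl <;>
      simp only [tup0, tup1, tup2, tup3] <;> omega
  · intro p hq
    rfl

lemma class_TTFT (k : ℕ) :
    ∑ h ∈ (SN k).filter (fun h => cl h = (true, true, false, true)),
      (Set.range fun σ : Equiv.Perm (Fin 4) => h ∘ σ).ncard * Wt h
    = 24 * (SQF 2 k).card := by
  classical
  have hval : ∀ h ∈ (SN k).filter (fun h => cl h = (true, true, false, true)),
      (Set.range fun σ : Equiv.Perm (Fin 4) => h ∘ σ).ncard * Wt h = 24 := by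
    intro h hm
    obtain ⟨hsum, h01, h12, h23, b0, b1, b2, b3, hcl⟩ := mem_class hm
    simp only [cl, Prod.mk.injEq, beq_iff_eq, beq_eq_false_iff_ne, Ne] at hcl
    obtain ⟨c0, c1, c2, c3⟩ := hcl
    have hW : Wt h = 4 := by
      have z0 : h 0 = 0 := by omega
      have z1 : h 1 = 0 := by omega
      have n2 : ¬ h 2 = 0 := by omega
      have n3 : ¬ h 3 = 0 := by omega
      simp [Wt, Fin.prod_univ_four, z0, z1, n2, n3]
    have hR : (Set.range fun σ : Equiv.Perm (Fin 4) => h ∘ σ).ncard = 6 := by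
      refine ncard_range_perm_twopairs h (h 0) (h 2) 2 3 (by decide) rfl (by omega) ?_ (by omega)
      intro t ht1 ht2
      rcases fin4_cases t with rfl | rfl | rfl | rfl <;>
        first | omega | exact absurd rfl ht1 | exact absurd rfl ht2
    rw [hR, hW]
  rw [Finset.sum_congr rfl hval, Finset.sum_const, smul_eq_mul, mul_comm]
  congr 1
  apply Finset.card_bij' (i := fun h _ => h 2)
    (j := fun d _ => tup 0 0 d d)
  · intro h hm
    obtain ⟨hsum, h01, h12, h23, b0, b1, b2, b3, hcl⟩ := mem_class hm
    simp only [cl, Prod.mk.injEq, beq_iff_eq, beq_eq_false_iff_ne, Ne] at hcl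
    obtain ⟨c0, c1, c2, c3⟩ := hcl
    have zz0 : h 0 = 0 := by omega
    have s0 : h 0 ^ 2 = 0 := by simp [zz0]
    have zz1 : h 1 = 0 := by omega
    have s1 : h 1 ^ 2 = 0 := by simp [zz1]
    have s23 : h 2 ^ 2 = h 3 ^ 2 := by rw [c3]
    simp only [SQF, Finset.mem_filter, Finset.mem_product, Finset.mem_range]
    repeat' apply And.intro
    all_goals first | omega | linarith
  · intro d hq
    simp only [SQF, Finset.mem_filter, Finset.mem_product, Finset.mem_range] at hq
    refine mem_class_mk _ _ _ _ (by linarith [hq]) (by omega) (by omega) (by omega) ?_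
    simp only [cl, Prod.mk.injEq, tup0, tup1, tup2, tup3]
    refine ⟨?_, ?_, ?_, ?_⟩ <;> simp only [beq_iff_eq, beq_eq_false_iff_ne, Ne] <;> omega
  · intro h hm
    obtain ⟨hsum, h01, h12, h23, b0, b1, b2, b3, hcl⟩ := mem_class hm
    simp only [cl, Prod.mk.injEq, beq_iff_eq, beq_eq_false_iff_ne, Ne] at hcl
    obtain ⟨c0, c1, c2, c3⟩ := hcl
    funext t
    rcases fin4_cases t with rfl | rfl | rfl | rfl <;>
      simp only [tup0, tup1, tup2, tup3] <;> omega
  · intro d hq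
    rfl

lemma class_TTTF (k : ℕ) :
    ∑ h ∈ (SN k).filter (fun h => cl h = (true, true, true, false)),
      (Set.range fun σ : Equiv.Perm (Fin 4) => h ∘ σ).ncard * Wt h
    = 8 * (SQF 1 k).card := by
  classical
  have hval : ∀ h ∈ (SN k).filter (fun h => cl h = (true, true, true, false)),
      (Set.range fun σ : Equiv.Perm (Fin 4) => h ∘ σ).ncard * Wt h = 8 := by
    intro h hm
    obtain ⟨hsum, h01, h12, h23, b0, b1, b2, b3, hcl⟩ := mem_class hm
    simp only [cl, Prod.mk.injEq, beq_iff_eq, beq_eq_false_iff_ne, Ne] at hcl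
    obtain ⟨c0, c1, c2, c3⟩ := hcl
    have hW : Wt h = 2 := by
      have z0 : h 0 = 0 := by omega
      have z1 : h 1 = 0 := by omega
      have z2 : h 2 = 0 := by omega
      have n3 : ¬ h 3 = 0 := by omega
      simp [Wt, Fin.prod_univ_four, z0, z1, z2, n3]
    have hR : (Set.range fun σ : Equiv.Perm (Fin 4) => h ∘ σ).ncard = 4 := by
      refine ncard_range_perm_triple h (h 0) (h 3) 3 rfl ?_ (by omega)
      intro t ht
      rcases fin4_cases t with rfl | rfl | rfl | rfl <;>
        first | omega | exact absurd rfl ht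
    rw [hR, hW]
  rw [Finset.sum_congr rfl hval, Finset.sum_const, smul_eq_mul, mul_comm]
  congr 1
  apply Finset.card_bij' (i := fun h _ => h 3)
    (j := fun d _ => tup 0 0 0 d)
  · intro h hm
    obtain ⟨hsum, h01, h12, h23, b0, b1, b2, b3, hcl⟩ := mem_class hm
    simp only [cl, Prod.mk.injEq, beq_iff_eq, beq_eq_false_iff_ne, Ne] at hcl
    obtain ⟨c0, c1, c2, c3⟩ := hcl
    have zz0 : h 0 = 0 := by omega
    have s0 : h 0 ^ 2 = 0 := by simp [zz0]
    have zz1 : h 1 = 0 := by omega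
    have s1 : h 1 ^ 2 = 0 := by simp [zz1]
    have zz2 : h 2 = 0 := by omega
    have s2 : h 2 ^ 2 = 0 := by simp [zz2]
    simp only [SQF, Finset.mem_filter, Finset.mem_product, Finset.mem_range]
    repeat' apply And.intro
    all_goals first | omega | linarith
  · intro d hq
    simp only [SQF, Finset.mem_filter, Finset.mem_product, Finset.mem_range] at hq
    refine mem_class_mk _ _ _ _ (by linarith [hq]) (by omega) (by omega) (by omega) ?_
    simp only [cl, Prod.mk.injEq, tup0, tup1, tup2, tup3]
    refine ⟨?_, ?_, ?_, ?_⟩ <;> simp only [beq_iff_eq, beq_eq_false_iff_ne, Ne] <;> omega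
  · intro h hm
    obtain ⟨hsum, h01, h12, h23, b0, b1, b2, b3, hcl⟩ := mem_class hm
    simp only [cl, Prod.mk.injEq, beq_iff_eq, beq_eq_false_iff_ne, Ne] at hcl
    obtain ⟨c0, c1, c2, c3⟩ := hcl
    funext t
    rcases fin4_cases t with rfl | rfl | rfl | rfl <;>
      simp only [tup0, tup1, tup2, tup3] <;> omega
  · intro d hq
    rfl
lemma class_FTFT (k : ℕ) :
    ∑ h ∈ (SN k).filter (fun h => cl h = (false, true, false, true)),
      (Set.range fun σ : Equiv.Perm (Fin 4) => h ∘ σ).ncard * Wt h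
    = 96 * L2half k := by
  classical
  by_cases hpar : k % 2 = 0
  · have hL : L2half k = (L2F (k / 2)).card := by rw [L2half, if_pos hpar, L2_card]
    rw [hL]
    have hdiv : 2 * (k / 2) = k := by omega
    have hval : ∀ h ∈ (SN k).filter (fun h => cl h = (false, true, false, true)),
        (Set.range fun σ : Equiv.Perm (Fin 4) => h ∘ σ).ncard * Wt h = 96 := by
      intro h hm
      obtain ⟨hsum, h01, h12, h23, b0, b1, b2, b3, hcl⟩ := mem_class hm
      simp only [cl, Prod.mk.injEq, beq_iff_eq, beq_eq_false_iff_ne, Ne] at hcl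
      obtain ⟨c0, c1, c2, c3⟩ := hcl
      have hW : Wt h = 16 := by
        have n0 : ¬ h 0 = 0 := by omega
        have n1 : ¬ h 1 = 0 := by omega
        have n2 : ¬ h 2 = 0 := by omega
        have n3 : ¬ h 3 = 0 := by omega
        simp [Wt, Fin.prod_univ_four, n0, n1, n2, n3]
      have hR : (Set.range fun σ : Equiv.Perm (Fin 4) => h ∘ σ).ncard = 6 := by
        refine ncard_range_perm_twopairs h (h 0) (h 2) 2 3 (by decide) rfl (by omega) ?_ (by omega)
        intro t ht1 ht2
        rcases fin4_cases t with rfl | rfl | rfl | rfl <;>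
          first | omega | exact absurd rfl ht1 | exact absurd rfl ht2
      rw [hR, hW]
    rw [Finset.sum_congr rfl hval, Finset.sum_const, smul_eq_mul, mul_comm]
    congr 1
    apply Finset.card_bij' (i := fun h _ => (h 0, h 2)) (j := fun p _ => tup p.1 p.1 p.2 p.2)
    · intro h hm
      obtain ⟨hsum, h01, h12, h23, b0, b1, b2, b3, hcl⟩ := mem_class hm
      simp only [cl, Prod.mk.injEq, beq_iff_eq, beq_eq_false_iff_ne, Ne] at hcl
      obtain ⟨c0, c1, c2, c3⟩ := hcl
      have s01 : h 0 ^ 2 = h 1 ^ 2 := by rw [c1]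
      have s23 : h 2 ^ 2 = h 3 ^ 2 := by rw [c3]
      have heq : 2 * (h 0 ^ 2 + h 2 ^ 2) = 2 * (k / 2) := by linarith
      have heq2 : h 0 ^ 2 + h 2 ^ 2 = k / 2 := Nat.eq_of_mul_eq_mul_left (by norm_num) heq
      have l0 := Nat.le_self_pow two_ne_zero (h 0)
      have l2 := Nat.le_self_pow two_ne_zero (h 2)
      simp only [L2F, Finset.mem_filter, Finset.mem_product, Finset.mem_range]
      repeat' apply And.intro
      all_goals first | omega | linarith
    · intro p hq
      simp only [L2F, Finset.mem_filter, Finset.mem_product, Finset.mem_range] at hq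
      obtain ⟨⟨bx, by'⟩, p1, p2, peq⟩ := hq
      refine mem_class_mk _ _ _ _ (by linarith) (by omega) (by omega) (by omega) ?_
      simp only [cl, Prod.mk.injEq, tup0, tup1, tup2, tup3]
      refine ⟨?_, ?_, ?_, ?_⟩ <;> simp only [beq_iff_eq, beq_eq_false_iff_ne, Ne] <;> omega
    · intro h hm
      obtain ⟨hsum, h01, h12, h23, b0, b1, b2, b3, hcl⟩ := mem_class hm
      simp only [cl, Prod.mk.injEq, beq_iff_eq, beq_eq_false_iff_ne, Ne] at hcl
      obtain ⟨c0, c1, c2, c3⟩ := hcl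
      funext t
      rcases fin4_cases t with rfl | rfl | rfl | rfl <;>
        simp only [tup0, tup1, tup2, tup3] <;> omega
    · intro p hq
      rfl
  · have hL : L2half k = 0 := by rw [L2half, if_neg hpar]
    rw [hL, mul_zero]
    have hempty : (SN k).filter (fun h => cl h = (false, true, false, true)) = ∅ := by
      apply Finset.eq_empty_of_forall_notMem
      intro h hm
      obtain ⟨hsum, h01, h12, h23, b0, b1, b2, b3, hcl⟩ := mem_class hm
      simp only [cl, Prod.mk.injEq, beq_iff_eq, beq_eq_false_iff_ne, Ne] at hcl
      obtain ⟨c0, c1, c2, c3⟩ := hcl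
      have s01 : h 0 ^ 2 = h 1 ^ 2 := by rw [c1]
      have s23 : h 2 ^ 2 = h 3 ^ 2 := by rw [c3]
      obtain ⟨S, hS⟩ : ∃ S, S = h 0 ^ 2 + h 2 ^ 2 := ⟨_, rfl⟩
      have h2S : 2 * S = k := by rw [hS]; linarith
      omega
    rw [hempty, Finset.sum_empty]

lemma class_TTTT (k : ℕ) (hk : 0 < k) :
    ∑ h ∈ (SN k).filter (fun h => cl h = (true, true, true, true)),
      (Set.range fun σ : Equiv.Perm (Fin 4) => h ∘ σ).ncard * Wt h = 0 := by
  have hempty : (SN k).filter (fun h => cl h = (true, true, true, true)) = ∅ := by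
    apply Finset.eq_empty_of_forall_notMem
    intro h hm
    obtain ⟨hsum, h01, h12, h23, b0, b1, b2, b3, hcl⟩ := mem_class hm
    simp only [cl, Prod.mk.injEq, beq_iff_eq, beq_eq_false_iff_ne, Ne] at hcl
    obtain ⟨c0, c1, c2, c3⟩ := hcl
    have z0 : h 0 = 0 := c0
    have z1 : h 1 = 0 := by omega
    have z2 : h 2 = 0 := by omega
    have z3 : h 3 = 0 := by omega
    rw [z0, z1, z2, z3] at hsum
    simp at hsum
    omega
  rw [hempty, Finset.sum_empty]
noncomputable def C (k : ℕ) : ℤ := N4 k - 192 * L112 k - 192 * L3 k - 48 * L2 k - 96 * L12 k - 64 * L13 k - 96 * L2half k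

lemma master (k : ℕ) (hk : 0 < k) :
    N4 k = 384 * L4 k + 192 * L112 k + 192 * L3 k + 48 * L2 k + 96 * L12 k + 64 * L13 k
      + 96 * L2half k + 8 * (SQF 1 k).card + 24 * (SQF 2 k).card + 32 * (SQF 3 k).card
      + 16 * (SQF 4 k).card := by
  classical
  have h0 : N4 k = ∑ h ∈ SN k, (Set.range fun σ : Equiv.Perm (Fin 4) => h ∘ σ).ncard * Wt h := by
    rw [N4_eq, AZ_card, sum_W]
  have h1 : ∑ h ∈ SN k, (Set.range fun σ : Equiv.Perm (Fin 4) => h ∘ σ).ncard * Wt h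
      = ∑ b ∈ (Finset.univ : Finset (Bool × Bool × Bool × Bool)),
          ∑ h ∈ (SN k).filter (fun h => cl h = b),
            (Set.range fun σ : Equiv.Perm (Fin 4) => h ∘ σ).ncard * Wt h :=
    (Finset.sum_fiberwise_of_maps_to (fun h _ => Finset.mem_univ _) _).symm
  rw [h0, h1]
  rw [show (Finset.univ : Finset (Bool × Bool × Bool × Bool)) = Finset.univ from rfl]
  rw [Fintype.sum_prod_type]
  simp only [Fintype.sum_bool, Fintype.sum_prod_type]
  rw [class_FFFF, class_FTFF, class_FFTF, class_FFFT, class_FTTF, class_FFTT, class_FTFT,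
    class_FTTT, class_TFFF, class_TFTF, class_TFFT, class_TFTT, class_TTFF, class_TTFT,
    class_TTTF, class_TTTT k hk]
  have e112 : (L112Fa k).card + (L112Fb k).card + (L112Fc k).card = L112 k := by
    rw [L112_card, L112_split]
  have e12 : (L12Fa k).card + (L12Fb k).card = L12 k := by rw [L12_card, L12_split]
  have e13 : (L13Fa k).card + (L13Fb k).card = L13 k := by rw [L13_card, L13_split]
  rw [← L4_card, ← L2_card, ← L3_card]
  omega

lemma SQF_singleton {r m : ℕ} (hm : 0 < m) (hr : 0 < r) : SQF r (r * m ^ 2) = {m} := by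
  ext d
  simp only [SQF, Finset.mem_filter, Finset.mem_range, Finset.mem_singleton]
  constructor
  · rintro ⟨hb, hd, he⟩
    exact Nat.pow_left_injective two_ne_zero (Nat.eq_of_mul_eq_mul_left hr he)
  · intro hdm
    rw [hdm]
    refine ⟨?_, hm, rfl⟩
    have h1 : m ≤ m ^ 2 := Nat.le_self_pow two_ne_zero m
    have h2 : m ^ 2 ≤ r * m ^ 2 := Nat.le_mul_of_pos_left _ hr
    linarith

lemma SQF_zero {r k : ℕ} (h : ∀ d, 0 < d → r * d ^ 2 ≠ k) : (SQF r k).card = 0 := by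
  rw [Finset.card_eq_zero]
  apply Finset.eq_empty_of_forall_notMem
  intro d hd
  simp only [SQF, Finset.mem_filter, Finset.mem_range] at hd
  exact h d hd.2.1 hd.2.2

lemma irr_aux {p r s : ℕ} (hp : p.Prime) (hr : ¬ p ∣ r) (hs1 : p ∣ s) (hs2 : ¬ p * p ∣ s)
    (a b : ℕ) (ha : 0 < a) (hb : 0 < b) : r * a ^ 2 ≠ s * b ^ 2 := by
  intro he
  have hr0 : r ≠ 0 := fun h => hr (h ▸ dvd_zero p)
  have hs0 : s ≠ 0 := fun h => hs2 (h ▸ dvd_zero (p * p))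
  have ha2 : a ^ 2 ≠ 0 := by positivity
  have hb2 : b ^ 2 ≠ 0 := by positivity
  have h1 := congrArg (fun n => n.factorization p) he
  rw [Nat.factorization_mul hr0 ha2, Nat.factorization_mul hs0 hb2] at h1
  simp only [Finsupp.add_apply, Nat.factorization_pow, Finsupp.smul_apply, smul_eq_mul] at h1
  have hrp : r.factorization p = 0 := Nat.factorization_eq_zero_of_not_dvd hr
  have hsp : s.factorization p = 1 := by
    have hle : 1 ≤ s.factorization p :=
      (Nat.Prime.pow_dvd_iff_le_factorization hp hs0).mp (by simpa using hs1)
    have hlt : ¬ 2 ≤ s.factorization p := fun hcon => hs2 (by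
      have h2 := (Nat.Prime.pow_dvd_iff_le_factorization hp hs0).mpr hcon
      simpa [pow_two] using h2)
    omega
  omega

theorem stmt11 (k : ℕ) (hk : 0 < k) :
    ((∃ m : ℕ, 0 < m ∧ Odd m ∧ k = m ^ 2) → (384 * L4 k : ℤ) = C k - 8) ∧
    ((∃ m : ℕ, 0 < m ∧ (k = 2 * m ^ 2 ∨ k = 4 * m ^ 2)) → (384 * L4 k : ℤ) = C k - 24) ∧
    ((∃ m : ℕ, 0 < m ∧ k = 3 * m ^ 2) → (384 * L4 k : ℤ) = C k - 32) := by
  have hM := master k hk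
  refine ⟨?_, ?_, ?_⟩
  · rintro ⟨m, hm, hodd, rfl⟩
    have e1 : (SQF 1 (m ^ 2)).card = 1 := by
      rw [show m ^ 2 = 1 * m ^ 2 by ring, SQF_singleton hm one_pos, Finset.card_singleton]
    have e2 : (SQF 2 (m ^ 2)).card = 0 := by
      apply SQF_zero
      intro d hd he
      exact irr_aux (p := 2) (r := 1) (s := 2) Nat.prime_two (by norm_num) (by norm_num)
        (by norm_num) m d hm hd (by rw [one_mul, ← he])
    have e3 : (SQF 3 (m ^ 2)).card = 0 := by
      apply SQF_zero
      intro d hd he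
      exact irr_aux (p := 3) (r := 1) (s := 3) Nat.prime_three (by norm_num) (by norm_num)
        (by norm_num) m d hm hd (by rw [one_mul, ← he])
    have e4 : (SQF 4 (m ^ 2)).card = 0 := by
      apply SQF_zero
      intro d hd he
      have h4 : (2 * d) ^ 2 = m ^ 2 := by rw [← he]; ring
      have := Nat.pow_left_injective two_ne_zero h4
      rcases hodd with ⟨t, ht⟩
      omega
    rw [e1, e2, e3, e4] at hM
    unfold C
    omega
  · rintro ⟨m, hm, hcase | hcase⟩ <;> subst hcase
    · have e1 : (SQF 1 (2 * m ^ 2)).card = 0 := by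
        apply SQF_zero
        intro d hd
        exact irr_aux (p := 2) (r := 1) (s := 2) Nat.prime_two (by norm_num) (by norm_num)
          (by norm_num) d m hd hm
      have e2 : (SQF 2 (2 * m ^ 2)).card = 1 := by
        rw [SQF_singleton hm (by norm_num), Finset.card_singleton]
      have e3 : (SQF 3 (2 * m ^ 2)).card = 0 := by
        apply SQF_zero
        intro d hd
        exact (irr_aux (p := 3) (r := 2) (s := 3) Nat.prime_three (by norm_num) (by norm_num)
          (by norm_num) m d hm hd).symm
      have e4 : (SQF 4 (2 * m ^ 2)).card = 0 := by
        apply SQF_zero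
        intro d hd he
        have h2 : 2 * (2 * d ^ 2) = 2 * (m ^ 2) := by linarith
        have h3 : 2 * d ^ 2 = m ^ 2 := Nat.eq_of_mul_eq_mul_left (by norm_num) h2
        exact irr_aux (p := 2) (r := 1) (s := 2) Nat.prime_two (by norm_num) (by norm_num)
          (by norm_num) m d hm hd (by rw [one_mul, ← h3])
      rw [e1, e2, e3, e4] at hM
      unfold C
      omega
    · have e1 : (SQF 1 (4 * m ^ 2)).card = 1 := by
        rw [show 4 * m ^ 2 = 1 * (2 * m) ^ 2 by ring, SQF_singleton (by omega) one_pos,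
          Finset.card_singleton]
      have e2 : (SQF 2 (4 * m ^ 2)).card = 0 := by
        apply SQF_zero
        intro d hd he
        have h2 : 2 * (d ^ 2) = 2 * (2 * m ^ 2) := by linarith
        have h3 : d ^ 2 = 2 * m ^ 2 := Nat.eq_of_mul_eq_mul_left (by norm_num) h2
        exact irr_aux (p := 2) (r := 1) (s := 2) Nat.prime_two (by norm_num) (by norm_num)
          (by norm_num) d m hd hm (by rw [one_mul, h3])
      have e3 : (SQF 3 (4 * m ^ 2)).card = 0 := by
        apply SQF_zero
        intro d hd
        exact (irr_aux (p := 3) (r := 4) (s := 3) Nat.prime_three (by norm_num) (by norm_num)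
          (by norm_num) m d hm hd).symm
      have e4 : (SQF 4 (4 * m ^ 2)).card = 1 := by
        rw [SQF_singleton hm (by norm_num), Finset.card_singleton]
      rw [e1, e2, e3, e4] at hM
      unfold C
      omega
  · rintro ⟨m, hm, rfl⟩
    have e1 : (SQF 1 (3 * m ^ 2)).card = 0 := by
      apply SQF_zero
      intro d hd
      exact irr_aux (p := 3) (r := 1) (s := 3) Nat.prime_three (by norm_num) (by norm_num)
        (by norm_num) d m hd hm
    have e2 : (SQF 2 (3 * m ^ 2)).card = 0 := by
      apply SQF_zero
      intro d hd
      exact irr_aux (p := 3) (r := 2) (s := 3) Nat.prime_three (by norm_num) (by norm_num)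
        (by norm_num) d m hd hm
    have e3 : (SQF 3 (3 * m ^ 2)).card = 1 := by
      rw [SQF_singleton hm (by norm_num), Finset.card_singleton]
    have e4 : (SQF 4 (3 * m ^ 2)).card = 0 := by
      apply SQF_zero
      intro d hd
      exact irr_aux (p := 3) (r := 4) (s := 3) Nat.prime_three (by norm_num) (by norm_num)
        (by norm_num) d m hd hm
    rw [e1, e2, e3, e4] at hM
    unfold C
    omega
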